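/- arXiv:2106.05564 — 9 statements merged into one kernel-verified Lean document; each statement's English description precedes it below -/
import Mathlib

section
/- Let K be a positive integer, let T > 0, set ω₀ = 2π/T, and let N ≥ 2K + 2 be an integer. Let 0 ≤ t₁ < t₂ < ⋯ < t_N < T be real numbers. Then the matrix A ∈ ℂ^{(N−1)×(2K+1)} defined by A[n, k] = e^{i k ω₀ t_{n+1}} − e^{i k ω₀ t_n} for k ∈ {−K, …, K} \ {0} and A[n, 0] = t_{n+1} − t_n (rows indexed by n = 1, …, N−1, columns by k = −K, …, K) has full column rank; that is, the only vector x ∈ ℂ^{2K+1} with A x = 0 is x = 0. -/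
open Complex Finset

lemma trig_vanish (K : ℕ) (T : ℝ) (hT : 0 < T)
    (c : Fin (2*K+1) → ℂ) (s : Fin (2*K+1) → ℝ) (hs : StrictMono s)
    (hgap : s (Fin.last (2*K)) - s 0 < T)
    (hval : ∀ i, ∑ j, c j *
      Complex.exp (Complex.I * (((j : ℤ) - (K : ℤ) : ℤ) : ℂ) * ((2 * Real.pi / T : ℝ) : ℂ)
        * ((s i : ℝ) : ℂ)) = 0) :
    c = 0 := by
  have hπ := Real.pi_pos
  set ω : ℝ := 2 * Real.pi / T with hω
  have hωpos : 0 < ω := by positivity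
  have hTω : ω * T = 2 * Real.pi := by rw [hω]; field_simp
  set z : Fin (2*K+1) → ℂ := fun i => Complex.exp (Complex.I * ω * s i) with hz
  have hinj : Function.Injective z := by
    intro i i' hii
    simp only [hz] at hii
    rw [Complex.exp_eq_exp_iff_exists_int] at hii
    obtain ⟨n, hn⟩ := hii
    have him : ω * s i = ω * s i' + n * (2 * Real.pi) := by
      have := congrArg Complex.im hn
      simpa [mul_comm] using this
    have hd : s i - s i' = n * T := by
      have h1 : ω * (s i - s i') = ω * ((n : ℝ) * T) := by
        rw [mul_sub]; rw [show ω * ((n:ℝ)*T) = (n:ℝ) * (ω * T) by ring, hTω]; linarith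
      exact mul_left_cancel₀ (ne_of_gt hωpos) h1
    have hle0 : s 0 ≤ s i := hs.monotone (Fin.zero_le i)
    have hle1 : s i ≤ s (Fin.last (2*K)) := hs.monotone (Fin.le_last i)
    have hle0' : s 0 ≤ s i' := hs.monotone (Fin.zero_le i')
    have hle1' : s i' ≤ s (Fin.last (2*K)) := hs.monotone (Fin.le_last i')
    have hn0 : n = 0 := by
      rcases lt_trichotomy n 0 with h | h | h
      · have : (n : ℝ) ≤ -1 := by exact_mod_cast (show n ≤ -1 by omega)
        nlinarith
      · exact h
      · have : (1 : ℝ) ≤ (n : ℝ) := by exact_mod_cast h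
        nlinarith
    apply hs.injective
    have : s i = s i' := by rw [hn0] at hd; push_cast at hd; linarith
    exact this
  have hzsum : ∀ i, ∑ j, c j * z i ^ (j : ℕ) = 0 := by
    intro i
    have key : ∀ j : Fin (2*K+1), z i ^ (j : ℕ) =
        Complex.exp (Complex.I * (K : ℂ) * ω * s i) *
          Complex.exp (Complex.I * (((j : ℤ) - (K : ℤ) : ℤ) : ℂ) * (ω : ℂ) * (s i : ℂ)) := by
      intro j
      simp only [hz]
      rw [← Complex.exp_nat_mul, ← Complex.exp_add]
      congr 1
      push_cast
      ring
    have : ∑ j, c j * z i ^ (j : ℕ) =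
        Complex.exp (Complex.I * (K : ℂ) * ω * s i) *
          ∑ j, c j * Complex.exp (Complex.I * (((j : ℤ) - (K : ℤ) : ℤ) : ℂ) * (ω : ℂ) * (s i : ℂ)) := by
      rw [Finset.mul_sum]
      apply Finset.sum_congr rfl
      intro j _
      rw [key j]; ring
    rw [this, hval i, mul_zero]
  exact Matrix.eq_zero_of_forall_index_sum_mul_pow_eq_zero hinj hzsum

/-- **Theorem 1 (FRI-TEM).** The IF-TEM measurement matrix `A` (with zero-frequency
column replaced by the time differences) has full column rank when `N ≥ 2K + 2`. -/
theorem matrixA_full_column_rank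
    (K : ℕ) (hK : 0 < K) (T : ℝ) (hT : 0 < T)
    (N : ℕ) (hN : 2 * K + 2 ≤ N)
    (t : Fin N → ℝ) (ht_mono : StrictMono t)
    (ht_nonneg : ∀ n, 0 ≤ t n) (ht_lt : ∀ n, t n < T)
    (A : Matrix (Fin (N - 1)) (Fin (2 * K + 1)) ℂ)
    (hA : ∀ (n : Fin (N - 1)) (j : Fin (2 * K + 1)),
      A n j =
        if ((j : ℤ) - (K : ℤ)) = 0 then
          (((t ⟨(n : ℕ) + 1, by have := n.isLt; omega⟩
              - t ⟨(n : ℕ), by have := n.isLt; omega⟩ : ℝ)) : ℂ)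
        else
          Complex.exp (Complex.I * (((j : ℤ) - (K : ℤ) : ℤ) : ℂ)
              * ((2 * Real.pi / T : ℝ) : ℂ)
              * ((t ⟨(n : ℕ) + 1, by have := n.isLt; omega⟩ : ℝ) : ℂ))
          - Complex.exp (Complex.I * (((j : ℤ) - (K : ℤ) : ℤ) : ℂ)
              * ((2 * Real.pi / T : ℝ) : ℂ)
              * ((t ⟨(n : ℕ), by have := n.isLt; omega⟩ : ℝ) : ℂ))) :
    ∀ x : Fin (2 * K + 1) → ℂ, A.mulVec x = 0 → x = 0 := by
  intro x hx
  have hπ := Real.pi_pos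
  set ω : ℝ := 2 * Real.pi / T with hωdef
  have hωpos : 0 < ω := by positivity
  -- basic objects
  set E : Fin (2*K+1) → ℝ → ℂ :=
    fun j s => Complex.exp (Complex.I * (((j : ℤ) - (K : ℤ) : ℤ) : ℂ) * (ω : ℂ) * (s : ℂ)) with hE
  set h : Fin (2*K+1) → ℝ → ℂ :=
    fun j s => if ((j : ℤ) - (K : ℤ)) = 0 then (s : ℂ) else E j s with hh
  set y : Fin (2*K+1) → ℂ :=
    fun j => if ((j : ℤ) - (K : ℤ)) = 0 then x j
      else x j * (Complex.I * (((j : ℤ) - (K : ℤ) : ℤ) : ℂ) * (ω : ℂ)) with hy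
  set H : ℝ → ℂ := fun s => ∑ j, x j * h j s with hHdef
  set H' : ℝ → ℂ := fun s => ∑ j, y j * E j s with hH'def
  have base : ∀ s : ℝ, HasDerivAt (fun u : ℝ => (u : ℂ)) 1 s := fun s => by
    simpa using (hasDerivAt_id s).ofReal_comp
  have hderiv : ∀ s : ℝ, HasDerivAt H (H' s) s := by
    intro s
    apply HasDerivAt.fun_sum
    intro j _
    by_cases hmj : ((j : ℤ) - (K : ℤ)) = 0
    · simp only [hh, hE, hy, hmj, if_pos, Int.cast_zero, mul_zero, zero_mul,
        Complex.exp_zero, mul_one]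
      simpa using (base s).const_mul (x j)
    · simp only [hh, hE, hy, hmj, if_neg, if_false]
      have hu : HasDerivAt (fun u : ℝ => Complex.I * (((j : ℤ) - (K : ℤ) : ℤ) : ℂ) * (ω : ℂ) * (u : ℂ))
          (Complex.I * (((j : ℤ) - (K : ℤ) : ℤ) : ℂ) * (ω : ℂ)) s := by
        simpa using (base s).const_mul (Complex.I * (((j : ℤ) - (K : ℤ) : ℤ) : ℂ) * (ω : ℂ))
      have he := hu.cexp
      have := he.const_mul (x j)
      exact this.congr_deriv (by ring)
  have hcont : Continuous H := continuous_iff_continuousAt.mpr fun s => (hderiv s).continuousAt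
  -- step 1 : H is constant along the sample points, consecutive version
  have hstep : ∀ n : Fin (N-1),
      H (t ⟨(n : ℕ) + 1, by have := n.isLt; omega⟩) = H (t ⟨(n : ℕ), by have := n.isLt; omega⟩) := by
    intro n
    have h0 := congrFun hx n
    simp only [Matrix.mulVec, dotProduct, Pi.zero_apply] at h0
    have hdiff : H (t ⟨(n : ℕ) + 1, by have := n.isLt; omega⟩)
        - H (t ⟨(n : ℕ), by have := n.isLt; omega⟩) = 0 := by
      simp only [hHdef]
      rw [← Finset.sum_sub_distrib, ← h0]
      apply Finset.sum_congr rfl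
      intro j _
      show x j * h j _ - x j * h j _ = A n j * x j
      rw [hA n j]
      by_cases hmj : ((j : ℤ) - (K : ℤ)) = 0
      · simp only [hh, hmj, if_pos]
        push_cast
        ring
      · simp only [hh, hE, hmj, if_neg, if_false]
        ring
    exact sub_eq_zero.mp hdiff
  -- interval endpoints
  have hidx : ∀ i : Fin (2*K+1), (i : ℕ) + 1 < N := fun i => by have := i.isLt; omega
  have hidx' : ∀ i : Fin (2*K+1), (i : ℕ) < N := fun i => by have := i.isLt; omega
  set a : Fin (2*K+1) → ℝ := fun i => t ⟨(i : ℕ), hidx' i⟩ with ha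
  set b : Fin (2*K+1) → ℝ := fun i => t ⟨(i : ℕ) + 1, hidx i⟩ with hb
  have hab : ∀ i, a i < b i := fun i => ht_mono (by simp [Fin.lt_def])
  have hHab : ∀ i, H (b i) = H (a i) := by
    intro i
    exact hstep ⟨(i : ℕ), by have := i.isLt; omega⟩
  -- Rolle for real and imaginary parts
  have hRolle : ∀ (L : ℂ →L[ℝ] ℝ), ∀ i : Fin (2*K+1),
      ∃ p ∈ Set.Ioo (a i) (b i), L (H' p) = 0 := by
    intro L i
    apply exists_hasDerivAt_eq_zero (f := fun s => L (H s)) (f' := fun s => L (H' s)) (hab i)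
    · exact (L.continuous.comp hcont).continuousOn
    · exact congrArg L (hHab i).symm
    · intro u _
      exact L.hasFDerivAt.comp_hasDerivAt u (hderiv u)
  -- common machinery to produce strictly monotone zero families
  have hzeros : ∀ (L : ℂ →L[ℝ] ℝ), ∃ p : Fin (2*K+1) → ℝ, StrictMono p ∧
      (p (Fin.last (2*K)) - p 0 < T) ∧ ∀ i, L (H' (p i)) = 0 := by
    intro L
    choose p hmem heq using hRolle L
    refine ⟨p, ?_, ?_, heq⟩
    · intro i i' hii'
      have h1 : p i < b i := (hmem i).2
      have h2 : a i' < p i' := (hmem i').1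
      have h3 : b i ≤ a i' := by
        apply ht_mono.monotone
        simp only [Fin.mk_le_mk]
        exact hii'
      linarith
    · have h1 : p (Fin.last (2*K)) < b (Fin.last (2*K)) := (hmem _).2
      have h2 : a 0 < p 0 := (hmem _).1
      have h3 : b (Fin.last (2*K)) < T := ht_lt _
      have h4 : (0 : ℝ) ≤ a 0 := ht_nonneg _
      linarith
  -- conjugation identity
  have hrevE : ∀ (j : Fin (2*K+1)) (s : ℝ),
      (starRingEnd ℂ) (E j s) = E (Fin.rev j) s := by
    intro j s
    simp only [hE, ← Complex.exp_conj]
    congr 1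
    have hval : ((Fin.rev j : Fin (2*K+1)) : ℤ) = 2 * (K : ℤ) - (j : ℤ) := by
      have h1 : ((Fin.rev j : Fin (2*K+1)) : ℕ) = 2*K - (j : ℕ) := by
        simp [Fin.val_rev]
      have h2 : (j : ℕ) ≤ 2*K := by have := j.isLt; omega
      omega
    rw [hval]
    simp only [map_mul, Complex.conj_I, Complex.conj_ofReal, map_intCast]
    push_cast
    ring
  have hconjsum : ∀ s : ℝ,
      ∑ j, (starRingEnd ℂ) (y (Fin.rev j)) * E j s = (starRingEnd ℂ) (H' s) := by
    intro s
    have h1 : (starRingEnd ℂ) (H' s) = ∑ j, (starRingEnd ℂ) (y j) * E (Fin.rev j) s := by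
      simp only [hH'def, map_sum, map_mul]
      exact Finset.sum_congr rfl fun j _ => by rw [hrevE]
    rw [h1]
    apply Fintype.sum_bijective Fin.rev Fin.rev_bijective
    intro j
    rw [Fin.rev_rev]
  -- apply trig_vanish for the Re and Im coefficient families
  obtain ⟨p, hpmono, hpgap, hpzero⟩ := hzeros Complex.reCLM
  obtain ⟨q, hqmono, hqgap, hqzero⟩ := hzeros Complex.imCLM
  have hcRe : (fun j => y j + (starRingEnd ℂ) (y (Fin.rev j))) = 0 := by
    apply trig_vanish K T hT _ p hpmono hpgap
    intro i
    have hsum : ∑ j, (y j + (starRingEnd ℂ) (y (Fin.rev j))) * E j (p i)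
        = H' (p i) + (starRingEnd ℂ) (H' (p i)) := by
      rw [show H' (p i) + (starRingEnd ℂ) (H' (p i))
          = (∑ j, y j * E j (p i)) + ∑ j, (starRingEnd ℂ) (y (Fin.rev j)) * E j (p i) by
        rw [hconjsum]]
      rw [← Finset.sum_add_distrib]
      exact Finset.sum_congr rfl fun j _ => by ring
    have := hpzero i
    simp only [Complex.reCLM_apply] at this
    calc ∑ j, (y j + (starRingEnd ℂ) (y (Fin.rev j))) *
          Complex.exp (Complex.I * (((j : ℤ) - (K : ℤ) : ℤ) : ℂ) * ((2 * Real.pi / T : ℝ) : ℂ) * ((p i : ℝ) : ℂ))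
        = H' (p i) + (starRingEnd ℂ) (H' (p i)) := hsum
      _ = ((2 * (H' (p i)).re : ℝ) : ℂ) := Complex.add_conj _
      _ = 0 := by rw [this]; norm_num
  have hcIm : (fun j => y j - (starRingEnd ℂ) (y (Fin.rev j))) = 0 := by
    apply trig_vanish K T hT _ q hqmono hqgap
    intro i
    have hsum : ∑ j, (y j - (starRingEnd ℂ) (y (Fin.rev j))) * E j (q i)
        = H' (q i) - (starRingEnd ℂ) (H' (q i)) := by
      rw [show H' (q i) - (starRingEnd ℂ) (H' (q i))
          = (∑ j, y j * E j (q i)) - ∑ j, (starRingEnd ℂ) (y (Fin.rev j)) * E j (q i) by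
        rw [hconjsum]]
      rw [← Finset.sum_sub_distrib]
      exact Finset.sum_congr rfl fun j _ => by ring
    have := hqzero i
    simp only [Complex.imCLM_apply] at this
    calc ∑ j, (y j - (starRingEnd ℂ) (y (Fin.rev j))) *
          Complex.exp (Complex.I * (((j : ℤ) - (K : ℤ) : ℤ) : ℂ) * ((2 * Real.pi / T : ℝ) : ℂ) * ((q i : ℝ) : ℂ))
        = H' (q i) - (starRingEnd ℂ) (H' (q i)) := hsum
      _ = ((2 * (H' (q i)).im : ℝ) : ℂ) * Complex.I := Complex.sub_conj _
      _ = 0 := by rw [this]; norm_num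
  -- conclude y = 0, then x = 0
  have hyzero : ∀ j, y j = 0 := by
    intro j
    have h1 := congrFun hcRe j
    have h2 := congrFun hcIm j
    simp only [Pi.zero_apply] at h1 h2
    have : 2 * y j = 0 := by linear_combination h1 + h2
    simpa using this
  funext j
  have := hyzero j
  simp only [hy] at this
  by_cases hmj : ((j : ℤ) - (K : ℤ)) = 0
  · simpa [hmj] using this
  · rw [if_neg hmj] at this
    rcases mul_eq_zero.mp this with h | h
    · exact h
    · exfalso
      have hI : Complex.I ≠ 0 := Complex.I_ne_zero
      have hm : (((j : ℤ) - (K : ℤ) : ℤ) : ℂ) ≠ 0 := by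
        exact_mod_cast hmj
      have hωc : ((ω : ℝ) : ℂ) ≠ 0 := by
        exact_mod_cast ne_of_gt hωpos
      exact (mul_ne_zero (mul_ne_zero hI hm) hωc) h
end

section
/- Let T > 0, ω₀ = 2π/T, and let L ≥ 1 and K ≥ L be integers. Let h : ℝ → ℝ be Lebesgue integrable with Fourier transform ĥ(ω) = ∫_ℝ h(t) e^{−iωt} dt satisfying ĥ(kω₀) ≠ 0 for every integer k with |k| ≤ K. For amplitudes a₁, …, a_L > 0 and pairwise distinct delays τ₁, …, τ_L ∈ [0, T), define the filtered signal y_{a,τ}(t) = Σ_{k=−K}^{K} (1/T) ĥ(kω₀) (Σ_{ℓ=1}^{L} a_ℓ e^{−i k ω₀ τ_ℓ}) e^{i k ω₀ t}. Let 0 ≤ t₁ < t₂ < ⋯ < t_N < T with N ≥ 2K + 2. If two such parameter sets (a, τ) and (a′, τ′) satisfy ∫_{t_n}^{t_{n+1}} y_{a,τ}(t) dt = ∫_{t_n}^{t_{n+1}} y_{a′,τ′}(t) dt for every n = 1, …, N−1, then there exists a permutation π of {1, …, L} such that τ′_ℓ = τ_{π(ℓ)} and a′_ℓ = a_{π(ℓ)}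 for all ℓ. -/
open MeasureTheory


open Complex

noncomputable def triA (M : ℕ) (ω : ℝ) (j : Fin (2*M+1)) (u : ℝ) : ℂ :=
  if (j:ℤ) - (M:ℤ) = 0 then (u:ℂ)
  else Complex.exp (Complex.I * (((j:ℤ)-(M:ℤ) : ℤ):ℂ) * (ω:ℂ) * u)
        / (Complex.I * (((j:ℤ)-(M:ℤ) : ℤ):ℂ) * (ω:ℂ))

lemma hasDerivAt_cexp_mul (c : ℂ) (u : ℝ) :
    HasDerivAt (fun v : ℝ => Complex.exp (c * v)) (Complex.exp (c * u) * c) u := by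
  have h0 : HasDerivAt (fun v : ℝ => (v : ℂ)) 1 u := Complex.ofRealCLM.hasDerivAt
  have h1 : HasDerivAt (fun v : ℝ => (c * v : ℂ)) c u := by simpa using h0.const_mul c
  exact h1.cexp

lemma triA_hasDeriv (M : ℕ) {ω : ℝ} (hω : ω ≠ 0) (j : Fin (2*M+1)) (u : ℝ) :
    HasDerivAt (triA M ω j)
      (Complex.exp (Complex.I * (((j:ℤ)-(M:ℤ) : ℤ):ℂ) * (ω:ℂ) * u)) u := by
  by_cases hj : (j:ℤ) - (M:ℤ) = 0
  · rw [show triA M ω j = fun v : ℝ => (v:ℂ) from funext fun v => by simp [triA, hj],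
      show Complex.I * (((j:ℤ)-(M:ℤ) : ℤ):ℂ) * (ω:ℂ) * u = 0 by rw [hj]; simp,
      Complex.exp_zero]
    exact Complex.ofRealCLM.hasDerivAt
  · rw [show triA M ω j = fun u : ℝ => Complex.exp (Complex.I * (((j:ℤ)-(M:ℤ) : ℤ):ℂ) * (ω:ℂ) * u)
        / (Complex.I * (((j:ℤ)-(M:ℤ) : ℤ):ℂ) * (ω:ℂ)) from funext fun v => by simp [triA, hj]]
    have hc : Complex.I * (((j:ℤ)-(M:ℤ) : ℤ):ℂ) * (ω:ℂ) ≠ 0 := by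
      refine mul_ne_zero (mul_ne_zero Complex.I_ne_zero ?_) ?_
      · exact_mod_cast Int.cast_ne_zero.mpr hj
      · exact_mod_cast hω
    have := (hasDerivAt_cexp_mul (Complex.I * (((j:ℤ)-(M:ℤ) : ℤ):ℂ) * (ω:ℂ)) u).div_const
      (Complex.I * (((j:ℤ)-(M:ℤ) : ℤ):ℂ) * (ω:ℂ))
    rwa [mul_div_assoc, div_self hc, mul_one] at this

noncomputable def trigSum (M : ℕ) (ω : ℝ) (b : Fin (2*M+1) → ℂ) (u : ℝ) : ℂ :=
  ∑ j : Fin (2*M+1), b j * Complex.exp (Complex.I * (((j:ℤ)-(M:ℤ) : ℤ):ℂ) * (ω:ℂ) * u)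

lemma trigSum_continuous (M : ℕ) (ω : ℝ) (b : Fin (2*M+1) → ℂ) :
    Continuous (trigSum M ω b) := by
  apply continuous_finset_sum
  intro j _
  exact continuous_const.mul
    (Complex.continuous_exp.comp (continuous_const.mul Complex.continuous_ofReal))

lemma trigSum_hasDeriv (M : ℕ) {ω : ℝ} (hω : ω ≠ 0) (b : Fin (2*M+1) → ℂ) (u : ℝ) :
    HasDerivAt (fun v => ∑ j : Fin (2*M+1), b j * triA M ω j v) (trigSum M ω b u) u :=
  HasDerivAt.fun_sum fun j _ => (triA_hasDeriv M hω j u).const_mul (b j)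

lemma key_sum (M : ℕ) (ω s : ℝ) (b : Fin (2*M+1) → ℂ) :
    (Complex.exp (Complex.I * (ω:ℂ) * s))^M * trigSum M ω b s
    = ∑ j : Fin (2*M+1), b j * (Complex.exp (Complex.I * (ω:ℂ) * s))^(j:ℕ) := by
  rw [trigSum]
  set z := Complex.exp (Complex.I * (ω:ℂ) * s) with hz_def
  have hz : z ≠ 0 := Complex.exp_ne_zero _
  rw [Finset.mul_sum]
  refine Finset.sum_congr rfl fun j _ => ?_
  rw [show Complex.I * (((j:ℤ)-(M:ℤ) : ℤ):ℂ) * (ω:ℂ) * s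
      = (((j:ℤ)-(M:ℤ) : ℤ):ℂ) * (Complex.I * (ω:ℂ) * s) by push_cast; ring,
    Complex.exp_int_mul, ← hz_def]
  rw [show z ^ M * (b j * z ^ ((j:ℤ) - (M:ℤ))) = b j * (z ^ (M:ℤ) * z ^ ((j:ℤ)-(M:ℤ))) by
      rw [zpow_natCast]; ring,
    ← zpow_add₀ hz, show (M:ℤ) + ((j:ℤ)-(M:ℤ)) = ((j:ℕ):ℤ) by omega, zpow_natCast]

lemma key_conj (M : ℕ) (ω s : ℝ) (b : Fin (2*M+1) → ℂ) :
    (Complex.exp (Complex.I * (ω:ℂ) * s))^M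
      * (starRingEnd ℂ) (trigSum M ω b s)
    = ∑ j : Fin (2*M+1), (starRingEnd ℂ) (b j.rev) * (Complex.exp (Complex.I * (ω:ℂ) * s))^(j:ℕ) := by
  rw [trigSum]
  set z := Complex.exp (Complex.I * (ω:ℂ) * s) with hz_def
  have hz : z ≠ 0 := Complex.exp_ne_zero _
  rw [map_sum, Finset.mul_sum]
  have step : ∀ j : Fin (2*M+1),
      z^M * (starRingEnd ℂ) (b j * Complex.exp (Complex.I * (((j:ℤ)-(M:ℤ) : ℤ):ℂ) * (ω:ℂ) * s))
      = (starRingEnd ℂ) (b j) * z ^ ((2*M : ℤ) - (j:ℕ)) := by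
    intro j
    rw [map_mul]
    have hce : (starRingEnd ℂ) (Complex.exp (Complex.I * (((j:ℤ)-(M:ℤ) : ℤ):ℂ) * (ω:ℂ) * s))
        = z ^ (((M:ℤ) - (j:ℕ))) := by
      rw [← Complex.exp_conj]
      rw [show (starRingEnd ℂ) (Complex.I * (((j:ℤ)-(M:ℤ) : ℤ):ℂ) * (ω:ℂ) * s)
          = (((M:ℤ) - (j:ℕ) : ℤ):ℂ) * (Complex.I * (ω:ℂ) * s) by
        simp only [map_mul, Complex.conj_I, Complex.conj_ofReal, map_intCast]
        push_cast
        ring]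
      rw [Complex.exp_int_mul, ← hz_def]
    rw [hce,
      show z ^ M * ((starRingEnd ℂ) (b j) * z ^ ((M:ℤ) - (j:ℕ)))
        = (starRingEnd ℂ) (b j) * (z ^ (M:ℤ) * z ^ ((M:ℤ) - (j:ℕ))) by rw [zpow_natCast]; ring,
      ← zpow_add₀ hz, show (M:ℤ) + ((M:ℤ) - (j:ℕ)) = (2*M : ℤ) - (j:ℕ) by ring]
  rw [Finset.sum_congr rfl fun j _ => step j]
  rw [← Equiv.sum_comp (Fin.revPerm) fun j => (starRingEnd ℂ) (b j) * z ^ ((2*M : ℤ) - (j:ℕ))]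
  refine Finset.sum_congr rfl fun j _ => ?_
  have hj : (j:ℕ) ≤ 2*M := by omega
  have hrev : ((Fin.revPerm j : Fin (2*M+1)) : ℕ) = 2*M - (j:ℕ) := by
    simp [Fin.val_rev]
  rw [hrev]
  congr 1
  rw [show (2*M : ℤ) - ((2*M - (j:ℕ) : ℕ) : ℤ) = ((j:ℕ) : ℤ) by push_cast; omega, zpow_natCast]

open Complex

lemma exp_inj_aux {T : ℝ} (hT : 0 < T) {s₁ s₂ : ℝ} (hd : |s₁ - s₂| < T)
    (heq : Complex.exp (Complex.I * ((2 * Real.pi / T : ℝ) : ℂ) * s₁)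
         = Complex.exp (Complex.I * ((2 * Real.pi / T : ℝ) : ℂ) * s₂)) : s₁ = s₂ := by
  rw [Complex.exp_eq_exp_iff_exists_int] at heq
  obtain ⟨n, hn⟩ := heq
  have him := congrArg Complex.im hn
  simp [Complex.mul_im, Complex.mul_re] at him
  have hπ := Real.pi_pos
  have hs : s₁ - s₂ = n * T := by
    have hT' : T ≠ 0 := ne_of_gt hT
    field_simp at him
    nlinarith [him]
  have hn0 : n = 0 := by
    rw [hs] at hd
    rw [abs_mul, abs_of_pos hT] at hd
    have h1 : |(n:ℝ)| < 1 := by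
      by_contra hc
      push_neg at hc
      nlinarith
    have h2 : |n| < 1 := by rw [← Int.cast_abs] at h1; exact_mod_cast h1
    exact Int.abs_lt_one_iff.mp h2
  rw [hn0] at hs
  simp at hs
  linarith

open Complex MeasureTheory

lemma trig_coeffs_zero (T : ℝ) (hT : 0 < T) (M : ℕ)
    (b : Fin (2*M+1) → ℂ)
    (N : ℕ) (hN : 2*M+2 ≤ N) (t : Fin N → ℝ) (ht_mono : StrictMono t)
    (ht_nonneg : ∀ n, 0 ≤ t n) (ht_lt : ∀ n, t n < T)
    (hint : ∀ (n : ℕ) (hn : n + 1 < N),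
      (∫ u in (t ⟨n, by omega⟩)..(t ⟨n+1, hn⟩), trigSum M (2*Real.pi/T) b u) = 0) :
    ∀ j, b j = 0 := by
  have hω : (2*Real.pi/T) ≠ 0 := by positivity
  have h0N : 0 < N := by omega
  -- antiderivative
  set G : ℝ → ℂ := fun u => ∑ j : Fin (2*M+1), b j * triA M (2*Real.pi/T) j u with hG_def
  have hG : ∀ u, HasDerivAt G (trigSum M (2*Real.pi/T) b u) u :=
    fun u => trigSum_hasDeriv M hω b u
  have hFTC : ∀ x z : ℝ, (∫ u in x..z, trigSum M (2*Real.pi/T) b u) = G z - G x := fun x z =>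
    intervalIntegral.integral_eq_sub_of_hasDerivAt (fun u _ => hG u)
      ((trigSum_continuous M _ b).intervalIntegrable x z)
  have hstep : ∀ (n : ℕ) (hn : n+1 < N), G (t ⟨n+1, hn⟩) = G (t ⟨n, by omega⟩) := by
    intro n hn
    have h1 := hint n hn
    rw [hFTC] at h1
    exact sub_eq_zero.mp h1
  have hconst : ∀ (n : ℕ) (hn : n < N), G (t ⟨n, hn⟩) = G (t ⟨0, h0N⟩) := by
    intro n
    induction n with
    | zero => intro _; rfl
    | succ k ih => intro hk; rw [hstep k hk]; exact ih (by omega)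
  -- Rolle for both real and imaginary parts
  have rolle : ∀ (p : ℂ →L[ℝ] ℝ), ∃ s : Fin (2*M+1) → ℝ, StrictMono s ∧
      (∀ n, 0 ≤ s n ∧ s n < T) ∧ ∀ n, p (trigSum M (2*Real.pi/T) b (s n)) = 0 := by
    intro p
    set F : ℝ → ℝ := fun u => p (G u - G (t ⟨0, h0N⟩)) with hF_def
    have hFder : ∀ u : ℝ, HasDerivAt F (p (trigSum M (2*Real.pi/T) b u)) u := fun u =>
      p.hasFDerivAt.comp_hasDerivAt u ((hG u).sub_const _)
    have hFcont : Continuous F :=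
      continuous_iff_continuousAt.mpr fun u => (hFder u).continuousAt
    have hFzero : ∀ (n : ℕ) (hn : n < N), F (t ⟨n, hn⟩) = 0 := by
      intro n hn
      simp only [hF_def, hconst n hn, sub_self, map_zero]
    have hex : ∀ n : Fin (2*M+1), ∃ x,
        (t ⟨(n:ℕ), by have := n.isLt; omega⟩ < x ∧ x < t ⟨(n:ℕ)+1, by have := n.isLt; omega⟩)
        ∧ p (trigSum M (2*Real.pi/T) b x) = 0 := by
      intro n
      have hn1 : (n:ℕ)+1 < N := by have := n.isLt; omega
      have hab : t ⟨(n:ℕ), by omega⟩ < t ⟨(n:ℕ)+1, hn1⟩ := ht_mono (by simp [Fin.lt_def])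
      obtain ⟨x, hx, hx0⟩ := exists_hasDerivAt_eq_zero hab hFcont.continuousOn
        (by rw [hFzero _ (by omega), hFzero _ hn1]) (fun u _ => hFder u)
      exact ⟨x, ⟨hx.1, hx.2⟩, hx0⟩
    choose s hs hps using hex
    refine ⟨s, ?_, ?_, hps⟩
    · intro n m hnm
      have h1 : t ⟨(n:ℕ)+1, by have := n.isLt; omega⟩ ≤ t ⟨(m:ℕ), by have := m.isLt; omega⟩ :=
        ht_mono.monotone (by simp [Fin.le_def]; omega)
      exact lt_of_lt_of_le (hs n).2 (le_trans h1 (le_of_lt (hs m).1))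
    · intro n
      exact ⟨le_of_lt (lt_of_le_of_lt (ht_nonneg _) (hs n).1),
        lt_trans (hs n).2 (ht_lt _)⟩
  obtain ⟨s₁, hs₁mono, hs₁mem, hs₁re⟩ := rolle Complex.reCLM
  obtain ⟨s₂, hs₂mono, hs₂mem, hs₂im⟩ := rolle Complex.imCLM
  -- injectivity of the evaluation points on the unit circle
  have zinj : ∀ (s : Fin (2*M+1) → ℝ), StrictMono s → (∀ n, 0 ≤ s n ∧ s n < T) →
      Function.Injective fun n => Complex.exp (Complex.I * ((2*Real.pi/T : ℝ):ℂ) * (s n)) := by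
    intro s hmono hmem n m heq
    have habs : |s n - s m| < T := by
      rw [abs_sub_lt_iff]
      constructor <;> [linarith [(hmem n).1, (hmem n).2, (hmem m).1, (hmem m).2];
        linarith [(hmem n).1, (hmem n).2, (hmem m).1, (hmem m).2]]
    exact hmono.injective (exp_inj_aux hT habs heq)
  -- Vandermonde systems
  have hvdm : ∀ (s : Fin (2*M+1) → ℝ), StrictMono s → (∀ n, 0 ≤ s n ∧ s n < T) →
      ∀ (v : Fin (2*M+1) → ℂ),
      (∀ n, ∑ j : Fin (2*M+1), v j * (Complex.exp (Complex.I * ((2*Real.pi/T : ℝ):ℂ) * (s n)))^(j:ℕ) = 0)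
      → v = 0 := by
    intro s hmono hmem v hv
    exact Matrix.eq_zero_of_forall_index_sum_mul_pow_eq_zero (zinj s hmono hmem) hv
  have hv₁ : (fun j : Fin (2*M+1) => b j + (starRingEnd ℂ) (b j.rev)) = 0 := by
    refine hvdm s₁ hs₁mono hs₁mem _ fun n => ?_
    have h0 : trigSum M (2*Real.pi/T) b (s₁ n)
        + (starRingEnd ℂ) (trigSum M (2*Real.pi/T) b (s₁ n)) = 0 := by
      rw [Complex.add_conj]
      have : (trigSum M (2*Real.pi/T) b (s₁ n)).re = 0 := hs₁re n
      rw [this]; simp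
    calc ∑ j : Fin (2*M+1), (b j + (starRingEnd ℂ) (b j.rev))
          * (Complex.exp (Complex.I * ((2*Real.pi/T : ℝ):ℂ) * (s₁ n)))^(j:ℕ)
        = (Complex.exp (Complex.I * ((2*Real.pi/T:ℝ):ℂ) * (s₁ n)))^M
            * (trigSum M (2*Real.pi/T) b (s₁ n)
              + (starRingEnd ℂ) (trigSum M (2*Real.pi/T) b (s₁ n))) := by
          rw [mul_add, key_sum, key_conj, ← Finset.sum_add_distrib]
          exact Finset.sum_congr rfl fun j _ => by ring
      _ = 0 := by rw [h0, mul_zero]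
  have hv₂ : (fun j : Fin (2*M+1) => b j - (starRingEnd ℂ) (b j.rev)) = 0 := by
    refine hvdm s₂ hs₂mono hs₂mem _ fun n => ?_
    have h0 : trigSum M (2*Real.pi/T) b (s₂ n)
        - (starRingEnd ℂ) (trigSum M (2*Real.pi/T) b (s₂ n)) = 0 := by
      rw [Complex.sub_conj]
      have : (trigSum M (2*Real.pi/T) b (s₂ n)).im = 0 := hs₂im n
      rw [this]; simp
    calc ∑ j : Fin (2*M+1), (b j - (starRingEnd ℂ) (b j.rev))
          * (Complex.exp (Complex.I * ((2*Real.pi/T : ℝ):ℂ) * (s₂ n)))^(j:ℕ)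
        = (Complex.exp (Complex.I * ((2*Real.pi/T:ℝ):ℂ) * (s₂ n)))^M
            * (trigSum M (2*Real.pi/T) b (s₂ n)
              - (starRingEnd ℂ) (trigSum M (2*Real.pi/T) b (s₂ n))) := by
          rw [mul_sub, key_sum, key_conj, ← Finset.sum_sub_distrib]
          exact Finset.sum_congr rfl fun j _ => by ring
      _ = 0 := by rw [h0, mul_zero]
  intro j
  have e₁ := congrFun hv₁ j
  have e₂ := congrFun hv₂ j
  simp only [Pi.zero_apply] at e₁ e₂
  linear_combination (e₁ + e₂) / 2


lemma exp_neg_inj_aux {T : ℝ} (hT : 0 < T) {s₁ s₂ : ℝ}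
    (h₁ : s₁ ∈ Set.Ico 0 T) (h₂ : s₂ ∈ Set.Ico 0 T)
    (heq : Complex.exp (-(Complex.I * ((2 * Real.pi / T : ℝ) : ℂ) * s₁))
         = Complex.exp (-(Complex.I * ((2 * Real.pi / T : ℝ) : ℂ) * s₂))) : s₁ = s₂ := by
  rw [Complex.exp_neg, Complex.exp_neg] at heq
  have hd : |s₁ - s₂| < T := by
    rw [abs_sub_lt_iff]
    exact ⟨by linarith [h₁.1, h₁.2, h₂.1, h₂.2], by linarith [h₁.1, h₁.2, h₂.1, h₂.2]⟩
  exact exp_inj_aux hT hd (inv_injective heq)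

lemma moments_perm (T : ℝ) (hT : 0 < T) (L K : ℕ) (hKL : L ≤ K) (hL : 1 ≤ L)
    (a a' τ τ' : Fin L → ℝ)
    (ha_pos : ∀ ℓ, 0 < a ℓ) (ha'_pos : ∀ ℓ, 0 < a' ℓ)
    (hτ_mem : ∀ ℓ, τ ℓ ∈ Set.Ico 0 T) (hτ'_mem : ∀ ℓ, τ' ℓ ∈ Set.Ico 0 T)
    (hτ_inj : Function.Injective τ) (hτ'_inj : Function.Injective τ')
    (hmom : ∀ k : ℤ, -(K:ℤ) ≤ k → k ≤ K →
      ∑ ℓ, (a ℓ : ℂ) * (Complex.exp (-(Complex.I * ((2*Real.pi/T : ℝ):ℂ) * (τ ℓ)))) ^ k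
      = ∑ ℓ, (a' ℓ : ℂ) * (Complex.exp (-(Complex.I * ((2*Real.pi/T : ℝ):ℂ) * (τ' ℓ)))) ^ k) :
    ∃ π : Equiv.Perm (Fin L), ∀ ℓ, τ' ℓ = τ (π ℓ) ∧ a' ℓ = a (π ℓ) := by
  classical
  set w : Fin L → ℂ := fun ℓ => Complex.exp (-(Complex.I * ((2*Real.pi/T : ℝ):ℂ) * (τ ℓ))) with hw_def
  set w' : Fin L → ℂ := fun ℓ => Complex.exp (-(Complex.I * ((2*Real.pi/T : ℝ):ℂ) * (τ' ℓ))) with hw'_def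
  have hw_inj : Function.Injective w := fun ℓ₁ ℓ₂ he =>
    hτ_inj (exp_neg_inj_aux hT (hτ_mem ℓ₁) (hτ_mem ℓ₂) he)
  have hw'_inj : Function.Injective w' := fun ℓ₁ ℓ₂ he =>
    hτ'_inj (exp_neg_inj_aux hT (hτ'_mem ℓ₁) (hτ'_mem ℓ₂) he)
  have hww' : ∀ ℓ₁ ℓ₂, w ℓ₁ = w' ℓ₂ → τ ℓ₁ = τ' ℓ₂ := fun ℓ₁ ℓ₂ he =>
    exp_neg_inj_aux hT (hτ_mem ℓ₁) (hτ'_mem ℓ₂) he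
  set W : Finset ℂ := Finset.image w Finset.univ ∪ Finset.image w' Finset.univ with hW_def
  have hWne : ∀ z ∈ W, z ≠ 0 := by
    intro z hz
    rcases Finset.mem_union.mp hz with h | h <;>
      · obtain ⟨ℓ, _, rfl⟩ := Finset.mem_image.mp h
        exact Complex.exp_ne_zero _
  set c : ℂ → ℂ := fun z =>
    (∑ ℓ ∈ Finset.univ.filter (fun ℓ => w ℓ = z), (a ℓ : ℂ))
      - (∑ ℓ ∈ Finset.univ.filter (fun ℓ => w' ℓ = z), (a' ℓ : ℂ)) with hc_def
  have hfib : ∀ (f : Fin L → ℝ) (wf : Fin L → ℂ), (∀ ℓ, wf ℓ ∈ W) → ∀ k : ℤ,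
      ∑ z ∈ W, (∑ ℓ ∈ Finset.univ.filter (fun ℓ => wf ℓ = z), (f ℓ : ℂ)) * z ^ k
      = ∑ ℓ, (f ℓ : ℂ) * wf ℓ ^ k := by
    intro f wf hwf k
    rw [← Finset.sum_fiberwise_of_maps_to (fun ℓ _ => hwf ℓ) (fun ℓ => (f ℓ : ℂ) * wf ℓ ^ k)]
    refine Finset.sum_congr rfl fun z hz => ?_
    rw [Finset.sum_mul]
    refine Finset.sum_congr rfl fun ℓ hℓ => ?_
    rw [(Finset.mem_filter.mp hℓ).2]
  have hcmom : ∀ k : ℤ, -(K:ℤ) ≤ k → k ≤ K → ∑ z ∈ W, c z * z ^ k = 0 := by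
    intro k hk1 hk2
    have h1 := hfib a w (fun ℓ => Finset.mem_union_left _ (Finset.mem_image_of_mem w (Finset.mem_univ ℓ))) k
    have h2 := hfib a' w' (fun ℓ => Finset.mem_union_right _ (Finset.mem_image_of_mem w' (Finset.mem_univ ℓ))) k
    simp only [hc_def, sub_mul, Finset.sum_sub_distrib]
    rw [h1, h2, hmom k hk1 hk2, sub_self]
  -- enumerate W
  set m := W.card with hm_def
  have hmle : m ≤ 2*K+1 := by
    have h1 : W.card ≤ (Finset.image w Finset.univ).card + (Finset.image w' Finset.univ).card :=
      Finset.card_union_le _ _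
    have h2 : (Finset.image w Finset.univ).card ≤ L := le_trans (Finset.card_image_le) (by simp)
    have h3 : (Finset.image w' Finset.univ).card ≤ L := le_trans (Finset.card_image_le) (by simp)
    omega
  set E := W.equivFin with hE_def
  set zz : Fin m → ℂ := fun i => ((E.symm i : ↥W) : ℂ) with hzz_def
  have hzz_inj : Function.Injective zz := fun i j hij => by
    have := Subtype.coe_injective hij
    exact E.symm.injective this
  have hzzW : ∀ i, zz i ∈ W := fun i => (E.symm i).2
  have hzz_ne : ∀ i, zz i ≠ 0 := fun i => hWne _ (hzzW i)
  have heqs : ∀ i : Fin m,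
      ∑ n : Fin m, (c (zz n) * zz n ^ (-(K:ℤ))) * zz n ^ (i:ℕ) = 0 := by
    intro i
    have hk1 : -(K:ℤ) ≤ (i:ℤ) - K := by omega
    have hk2 : ((i:ℤ) - K) ≤ K := by have := i.isLt; omega
    have key := hcmom ((i:ℤ) - K) hk1 hk2
    rw [← Finset.sum_coe_sort W (fun z => c z * (z:ℂ) ^ ((i:ℤ) - K))] at key
    rw [← Equiv.sum_comp E.symm (fun x : ↥W => c x * (x:ℂ) ^ ((i:ℤ) - K))] at key
    rw [← key]
    refine Finset.sum_congr rfl fun n _ => ?_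
    rw [mul_assoc, ← zpow_natCast (zz n) (i:ℕ), ← zpow_add₀ (hzz_ne n),
      show -(K:ℤ) + (i:ℕ) = (i:ℤ) - K by omega]
  have hv : (fun n : Fin m => c (zz n) * zz n ^ (-(K:ℤ))) = 0 :=
    Matrix.eq_zero_of_forall_pow_sum_mul_pow_eq_zero hzz_inj heqs
  have hczero : ∀ z ∈ W, c z = 0 := by
    intro z hz
    have h1 := congrFun hv (E ⟨z, hz⟩)
    simp only [Pi.zero_apply] at h1
    have h2 : zz (E ⟨z, hz⟩) = z := by simp [hzz_def]
    rw [h2] at h1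
    rcases mul_eq_zero.mp h1 with h | h
    · exact h
    · exact absurd h (zpow_ne_zero _ (hWne z hz))
  -- extract matching
  have hex : ∀ ℓ, ∃ p, τ p = τ' ℓ ∧ a p = a' ℓ := by
    intro ℓ
    have hmem : w' ℓ ∈ W := Finset.mem_union_right _ (Finset.mem_image_of_mem w' (Finset.mem_univ ℓ))
    have h0 := hczero (w' ℓ) hmem
    have hfilt' : Finset.univ.filter (fun ℓ' => w' ℓ' = w' ℓ) = {ℓ} := by
      ext ℓ'
      simp only [Finset.mem_filter, Finset.mem_univ, true_and, Finset.mem_singleton]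
      exact ⟨fun he => hw'_inj he, fun he => by rw [he]⟩
    rw [hc_def] at h0
    simp only [hfilt', Finset.sum_singleton] at h0
    have hsum : (∑ ℓ' ∈ Finset.univ.filter (fun ℓ' => w ℓ' = w' ℓ), (a ℓ' : ℂ)) = (a' ℓ : ℂ) := by
      linear_combination h0
    have hne : (Finset.univ.filter (fun ℓ' => w ℓ' = w' ℓ)).Nonempty := by
      by_contra hc'
      rw [Finset.not_nonempty_iff_eq_empty] at hc'
      rw [hc', Finset.sum_empty] at hsum
      have : (0:ℝ) = a' ℓ := by exact_mod_cast hsum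
      exact absurd this.symm (ne_of_gt (ha'_pos ℓ))
    obtain ⟨p, hp⟩ := hne
    have hpw : w p = w' ℓ := (Finset.mem_filter.mp hp).2
    have hfilt : Finset.univ.filter (fun ℓ' => w ℓ' = w' ℓ) = {p} := by
      ext ℓ'
      simp only [Finset.mem_filter, Finset.mem_univ, true_and, Finset.mem_singleton]
      constructor
      · intro he; exact hw_inj (he.trans hpw.symm)
      · intro he; rw [he]; exact hpw
    rw [hfilt, Finset.sum_singleton] at hsum
    exact ⟨p, hww' p ℓ hpw, by exact_mod_cast hsum⟩
  choose π₀ hπτ hπa using hex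
  have hπ₀_inj : Function.Injective π₀ := by
    intro ℓ₁ ℓ₂ he
    apply hτ'_inj
    rw [← hπτ ℓ₁, ← hπτ ℓ₂, he]
  have hbij := Finite.injective_iff_bijective.mp hπ₀_inj
  refine ⟨Equiv.ofBijective π₀ hbij, fun ℓ => ⟨?_, ?_⟩⟩
  · exact (hπτ ℓ).symm
  · exact (hπa ℓ).symm


/-- **Theorem 2 (FRI-TEM).** Perfect recovery of the FRI parameters from `N ≥ 2K + 2`
IF-TEM measurements, with a sampling kernel passing the Fourier-series coefficients
indexed by `-K, …, K` and `K ≥ L`. -/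
theorem fri_tem_perfect_recovery
    (T : ℝ) (hT : 0 < T) (L K : ℕ) (hL : 1 ≤ L) (hKL : L ≤ K)
    (h : ℝ → ℝ) (hh_int : Integrable h)
    (hhat : ℝ → ℂ)
    (hhat_def : ∀ ω : ℝ, hhat ω = ∫ s : ℝ, (h s : ℂ) * Complex.exp (-Complex.I * ω * s))
    (hhat_ne : ∀ k : ℤ, |k| ≤ (K : ℤ) → hhat (k * (2 * Real.pi / T)) ≠ 0)
    (y : (Fin L → ℝ) → (Fin L → ℝ) → ℝ → ℂ)
    (hy_def : ∀ (α τ : Fin L → ℝ) (u : ℝ),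
      y α τ u = ∑ j : Fin (2 * K + 1),
        (1 / (T : ℂ)) * hhat (((j : ℤ) - (K : ℤ)) * (2 * Real.pi / T))
          * (∑ ℓ : Fin L, (α ℓ : ℂ) *
              Complex.exp (-Complex.I * (((j : ℤ) - (K : ℤ) : ℤ) : ℂ)
                * ((2 * Real.pi / T : ℝ) : ℂ) * (τ ℓ : ℂ)))
          * Complex.exp (Complex.I * (((j : ℤ) - (K : ℤ) : ℤ) : ℂ)
              * ((2 * Real.pi / T : ℝ) : ℂ) * (u : ℂ)))
    (a a' τ τ' : Fin L → ℝ)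
    (ha_pos : ∀ ℓ, 0 < a ℓ) (ha'_pos : ∀ ℓ, 0 < a' ℓ)
    (hτ_mem : ∀ ℓ, τ ℓ ∈ Set.Ico 0 T) (hτ'_mem : ∀ ℓ, τ' ℓ ∈ Set.Ico 0 T)
    (hτ_inj : Function.Injective τ) (hτ'_inj : Function.Injective τ')
    (N : ℕ) (hN : 2 * K + 2 ≤ N)
    (t : Fin N → ℝ) (ht_mono : StrictMono t)
    (ht_nonneg : ∀ n, 0 ≤ t n) (ht_lt : ∀ n, t n < T)
    (hmeas : ∀ n : Fin (N - 1),
      (∫ u in (t ⟨(n : ℕ), by have := n.isLt; omega⟩)..(t ⟨(n : ℕ) + 1, by have := n.isLt; omega⟩),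
        y a τ u)
      = ∫ u in (t ⟨(n : ℕ), by have := n.isLt; omega⟩)..(t ⟨(n : ℕ) + 1, by have := n.isLt; omega⟩),
        y a' τ' u) :
    ∃ π : Equiv.Perm (Fin L), ∀ ℓ : Fin L, τ' ℓ = τ (π ℓ) ∧ a' ℓ = a (π ℓ) := by
  classical
  set coef : (Fin L → ℝ) → (Fin L → ℝ) → Fin (2 * K + 1) → ℂ := fun α τv j =>
    (1 / (T : ℂ)) * hhat (((j : ℤ) - (K : ℤ)) * (2 * Real.pi / T))
      * (∑ ℓ : Fin L, (α ℓ : ℂ) *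
          Complex.exp (-Complex.I * (((j : ℤ) - (K : ℤ) : ℤ) : ℂ)
            * ((2 * Real.pi / T : ℝ) : ℂ) * (τv ℓ : ℂ))) with hcoef_def
  have hy_trig : ∀ (α τv : Fin L → ℝ), y α τv = trigSum K (2*Real.pi/T) (coef α τv) := by
    intro α τv
    funext u
    rw [hy_def, trigSum]
  set b : Fin (2*K+1) → ℂ := fun j => coef a τ j - coef a' τ' j with hb_def
  have hint : ∀ (n : ℕ) (hn : n + 1 < N),
      (∫ u in (t ⟨n, by omega⟩)..(t ⟨n+1, hn⟩), trigSum K (2*Real.pi/T) b u) = 0 := by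
    intro n hn
    have hsub : trigSum K (2*Real.pi/T) b = fun u =>
        trigSum K (2*Real.pi/T) (coef a τ) u - trigSum K (2*Real.pi/T) (coef a' τ') u := by
      funext u
      simp only [trigSum, hb_def, sub_mul, Finset.sum_sub_distrib]
    rw [hsub, intervalIntegral.integral_sub
      ((trigSum_continuous K _ _).intervalIntegrable _ _)
      ((trigSum_continuous K _ _).intervalIntegrable _ _),
      ← hy_trig a τ, ← hy_trig a' τ']
    have := hmeas ⟨n, by omega⟩
    rw [sub_eq_zero]
    exact this
  have hb0 : ∀ j, b j = 0 :=
    trig_coeffs_zero T hT K b N (by omega) t ht_mono ht_nonneg ht_lt hint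
  -- extract moment equalities
  have hmom : ∀ k : ℤ, -(K:ℤ) ≤ k → k ≤ K →
      ∑ ℓ, (a ℓ : ℂ) * (Complex.exp (-(Complex.I * ((2*Real.pi/T : ℝ):ℂ) * (τ ℓ)))) ^ k
      = ∑ ℓ, (a' ℓ : ℂ) * (Complex.exp (-(Complex.I * ((2*Real.pi/T : ℝ):ℂ) * (τ' ℓ)))) ^ k := by
    intro k hk1 hk2
    set j : Fin (2*K+1) := ⟨(k + K).toNat, by omega⟩ with hj_def
    have hjk : ((j:ℕ) : ℤ) - (K:ℤ) = k := by
      simp only [hj_def]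
      rw [Int.toNat_of_nonneg (by omega)]
      omega
    have hcc : coef a τ j = coef a' τ' j := sub_eq_zero.mp (hb0 j)
    have hmul_ne : (1 / (T : ℂ)) * hhat (((j : ℤ) - (K : ℤ)) * (2 * Real.pi / T)) ≠ 0 := by
      refine mul_ne_zero (one_div_ne_zero ?_) ?_
      · exact_mod_cast ne_of_gt hT
      · have := hhat_ne ((j:ℤ) - (K:ℤ)) (by rw [abs_le]; omega)
        rwa [Int.cast_sub] at this
    have hS : (∑ ℓ : Fin L, (a ℓ : ℂ) *
          Complex.exp (-Complex.I * (((j : ℤ) - (K : ℤ) : ℤ) : ℂ)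
            * ((2 * Real.pi / T : ℝ) : ℂ) * (τ ℓ : ℂ)))
        = (∑ ℓ : Fin L, (a' ℓ : ℂ) *
          Complex.exp (-Complex.I * (((j : ℤ) - (K : ℤ) : ℤ) : ℂ)
            * ((2 * Real.pi / T : ℝ) : ℂ) * (τ' ℓ : ℂ))) := by
      simp only [hcoef_def] at hcc
      exact mul_left_cancel₀ hmul_ne (by rw [mul_assoc, mul_assoc] at hcc ⊢; exact hcc)
    rw [← hjk]
    have hconv : ∀ (α τv : Fin L → ℝ),
        (∑ ℓ : Fin L, (α ℓ : ℂ) *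
          Complex.exp (-Complex.I * (((j : ℤ) - (K : ℤ) : ℤ) : ℂ)
            * ((2 * Real.pi / T : ℝ) : ℂ) * (τv ℓ : ℂ)))
        = ∑ ℓ, (α ℓ : ℂ) * (Complex.exp (-(Complex.I * ((2*Real.pi/T : ℝ):ℂ) * (τv ℓ)))) ^ (((j:ℕ):ℤ) - (K:ℤ)) := by
      intro α τv
      refine Finset.sum_congr rfl fun ℓ _ => ?_
      rw [show -Complex.I * (((j : ℤ) - (K : ℤ) : ℤ) : ℂ) * ((2 * Real.pi / T : ℝ) : ℂ) * (τv ℓ : ℂ)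
          = (((j : ℤ) - (K : ℤ) : ℤ) : ℂ) * (-(Complex.I * ((2*Real.pi/T : ℝ):ℂ) * (τv ℓ))) by
        push_cast; ring, Complex.exp_int_mul]
    rw [← hconv a τ, ← hconv a' τ']
    exact hS
  exact moments_perm T hT L K hKL hL a a' τ τ' ha_pos ha'_pos hτ_mem hτ'_mem hτ_inj hτ'_inj hmom
end

section
/- Let K be a positive integer, T > 0, ω₀ = 2π/T, and let f(t) = Σ_{k=−K}^{K} c_k e^{i k ω₀ t} with complex coefficients satisfying the conjugate symmetry c_{−k} = conj(c_k) for all k (so f is a real-valued trigonometric polynomial of degree K and period T). Suppose there exist real numbers a and d and N ≥ 2K + 2 distinct points 0 ≤ t₁ < t₂ < ⋯ < t_N < T such that f(t_n) = a t_n + d for every n = 1, …, N. Then a = 0, c_k = 0 for all k ≠ 0, and c₀ = d. -/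
open Finset

lemma trig_vanish_s4 (M : ℕ) (B : ℤ → ℂ) (z : Fin (2*M+1) → ℂ) (hz0 : ∀ n, z n ≠ 0)
    (hinj : Function.Injective z)
    (hv : ∀ n, ∑ k ∈ Finset.Icc (-(M:ℤ)) (M:ℤ), B k * (z n) ^ k = 0) :
    ∀ k ∈ Finset.Icc (-(M:ℤ)) (M:ℤ), B k = 0 := by
  set P : Polynomial ℂ :=
    ∑ j ∈ Finset.range (2*M+1), Polynomial.monomial j (B ((j : ℤ) - M)) with hP
  have hdeg : P.natDegree ≤ 2*M := by
    refine Polynomial.natDegree_sum_le_of_forall_le _ _ (fun j hj => ?_)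
    exact (Polynomial.natDegree_monomial_le _).trans (by
      have := Finset.mem_range.mp hj; omega)
  have hkey : ∀ x : ℂ, x ≠ 0 →
      P.eval x = x ^ M * ∑ k ∈ Finset.Icc (-(M:ℤ)) (M:ℤ), B k * x ^ k := by
    intro x hx
    rw [hP, Polynomial.eval_finset_sum, Finset.mul_sum]
    refine Finset.sum_nbij' (fun j => (j : ℤ) - M) (fun k => (k + M).toNat) ?_ ?_ ?_ ?_ ?_
    · intro j hj
      have := Finset.mem_range.mp hj
      simp only [Finset.mem_Icc]; omega
    · intro k hk
      have := Finset.mem_Icc.mp hk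
      simp only [Finset.mem_range]; omega
    · intro j hj; have := Finset.mem_range.mp hj; omega
    · intro k hk; have := Finset.mem_Icc.mp hk; omega
    · intro j hj
      have hj' := Finset.mem_range.mp hj
      rw [Polynomial.eval_monomial]
      have hx2 : (x : ℂ) ^ j = x ^ M * x ^ ((j : ℤ) - M) := by
        have h1 : ((M : ℤ)) + ((j : ℤ) - M) = (j : ℤ) := by ring
        calc (x : ℂ) ^ j = x ^ ((j : ℤ)) := by rw [zpow_natCast]
          _ = x ^ ((M : ℤ) + ((j : ℤ) - M)) := by rw [h1]
          _ = x ^ (M : ℤ) * x ^ ((j : ℤ) - M) := zpow_add₀ hx _ _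
          _ = x ^ M * x ^ ((j : ℤ) - M) := by rw [zpow_natCast]
      rw [hx2]; ring
  have heval : ∀ n, P.eval (z n) = 0 := by
    intro n
    rw [hkey (z n) (hz0 n), hv n, mul_zero]
  have hP0 : P = 0 := by
    refine Polynomial.eq_zero_of_natDegree_lt_card_of_eval_eq_zero P hinj heval ?_
    simpa [Fintype.card_fin] using Nat.lt_succ_of_le hdeg
  intro k hk
  have hk' := Finset.mem_Icc.mp hk
  have hc : P.coeff (k + M).toNat = B k := by
    rw [hP, Polynomial.finset_sum_coeff]
    rw [Finset.sum_eq_single ((k + M).toNat)]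
    · rw [Polynomial.coeff_monomial, if_pos rfl]
      congr 1; omega
    · intro j hj hne
      rw [Polynomial.coeff_monomial, if_neg (by omega)]
    · intro h
      exact absurd (Finset.mem_range.mpr (by omega)) h
  rw [hP0, Polynomial.coeff_zero] at hc
  exact hc.symm

lemma conj_trig_sum (K : ℕ) (b : ℤ → ℂ)
    (hb : ∀ k ∈ Finset.Icc (-(K:ℤ)) (K:ℤ), b (-k) = (starRingEnd ℂ) (b k)) (x y : ℝ) :
    (starRingEnd ℂ) (∑ k ∈ Finset.Icc (-(K:ℤ)) (K:ℤ),
        b k * Complex.exp (Complex.I * k * (x:ℂ) * (y:ℂ)))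
      = ∑ k ∈ Finset.Icc (-(K:ℤ)) (K:ℤ),
        b k * Complex.exp (Complex.I * k * (x:ℂ) * (y:ℂ)) := by
  rw [map_sum]
  refine Finset.sum_nbij' (fun k => -k) (fun k => -k) ?_ ?_ ?_ ?_ ?_
  · intro k hk; simp only [Finset.mem_Icc] at hk ⊢; omega
  · intro k hk; simp only [Finset.mem_Icc] at hk ⊢; omega
  · intro k _; simp
  · intro k _; simp
  · intro k hk
    rw [map_mul, ← hb k hk, ← Complex.exp_conj]
    congr 2
    simp only [map_mul, Complex.conj_I, Complex.conj_ofReal, map_intCast]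
    push_cast
    ring

lemma trig_hasDerivAt (S : Finset ℤ) (c : ℤ → ℂ) (ω : ℝ) (w : ℂ) :
    HasDerivAt (fun w : ℂ => ∑ k ∈ S, c k * Complex.exp (Complex.I * k * (ω:ℂ) * w))
      (∑ k ∈ S, (Complex.I * k * (ω:ℂ) * c k) * Complex.exp (Complex.I * k * (ω:ℂ) * w)) w := by
  apply HasDerivAt.fun_sum
  intro k hk
  have h1 : HasDerivAt (fun w : ℂ => Complex.I * k * (ω:ℂ) * w) (Complex.I * k * (ω:ℂ)) w := by
    simpa using (hasDerivAt_id w).const_mul (Complex.I * k * (ω:ℂ))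
  have h2 := (Complex.hasDerivAt_exp (Complex.I * k * (ω:ℂ) * w)).comp w h1
  have h3 := h2.const_mul (c k)
  exact h3.congr_deriv (by ring)

/-- **Null-space lemma (Appendix).** A real trigonometric polynomial of degree `K` and
period `T` that agrees with an affine function `a t + d` at `N ≥ 2K + 2` distinct points
of `[0, T)` must be the constant `d` (and `a = 0`). -/
theorem trig_poly_eq_affine_many_points
    (K : ℕ) (hK : 0 < K) (T : ℝ) (hT : 0 < T)
    (c : ℤ → ℂ)
    (hconj : ∀ k : ℤ, k ∈ Finset.Icc (-(K : ℤ)) (K : ℤ) →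
      c (-k) = (starRingEnd ℂ) (c k))
    (f : ℝ → ℂ)
    (hf : ∀ u : ℝ, f u = ∑ k ∈ Finset.Icc (-(K : ℤ)) (K : ℤ),
      c k * Complex.exp (Complex.I * (k : ℂ) * ((2 * Real.pi / T : ℝ) : ℂ) * (u : ℂ)))
    (a d : ℝ)
    (N : ℕ) (hN : 2 * K + 2 ≤ N)
    (t : Fin N → ℝ) (ht_mono : StrictMono t)
    (ht_nonneg : ∀ n, 0 ≤ t n) (ht_lt : ∀ n, t n < T)
    (hagree : ∀ n : Fin N, f (t n) = ((a * t n + d : ℝ) : ℂ)) :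
    a = 0 ∧ (∀ k : ℤ, k ∈ Finset.Icc (-(K : ℤ)) (K : ℤ) → k ≠ 0 → c k = 0) ∧ c 0 = (d : ℂ) := by
  have hπ : (0:ℝ) < Real.pi := Real.pi_pos
  set ω : ℝ := 2 * Real.pi / T with hωdef
  have hω0 : 0 < ω := by positivity
  have hωT : ω * T = 2 * Real.pi := by
    rw [hωdef]; field_simp
  set S := Finset.Icc (-(K:ℤ)) (K:ℤ) with hS
  have h0S : (0:ℤ) ∈ S := by
    rw [hS, Finset.mem_Icc]; omega
  -- the derivative trig polynomial (as a function of a real variable)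
  set g : ℝ → ℂ := fun u =>
    ∑ k ∈ S, (Complex.I * k * (ω:ℂ) * c k) * Complex.exp (Complex.I * k * (ω:ℂ) * (u:ℂ))
    with hgdef
  -- F = Re f - affine, with derivative (g x).re - a
  set F : ℝ → ℝ := fun u =>
    (∑ k ∈ S, c k * Complex.exp (Complex.I * k * (ω:ℂ) * (u:ℂ))).re - (a * u + d) with hFdef
  have hF' : ∀ x : ℝ, HasDerivAt F ((g x).re - a) x := by
    intro x
    have h1 := (trig_hasDerivAt S c ω x).real_of_complex
    have h2 : HasDerivAt (fun u : ℝ => a * u + d) a x := by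
      simpa using ((hasDerivAt_id x).const_mul a).add_const d
    exact h1.sub h2
  have hFz : ∀ n : Fin N, F (t n) = 0 := by
    intro n
    have h1 : (∑ k ∈ S, c k * Complex.exp (Complex.I * k * (ω:ℂ) * ((t n : ℝ):ℂ)))
        = f (t n) := (hf (t n)).symm
    rw [hFdef]
    simp only [h1, hagree n, Complex.ofReal_re]
    ring
  -- Rolle at consecutive points
  have hlt1 : ∀ m : ℕ, m < 2*K+1 → m < N := fun m hm => by omega
  have hlt2 : ∀ m : ℕ, m < 2*K+1 → m + 1 < N := fun m hm => by omega
  have H : ∀ m : Fin (2*K+1), ∃ sm,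
      sm ∈ Set.Ioo (t ⟨m.1, hlt1 m.1 m.2⟩) (t ⟨m.1+1, hlt2 m.1 m.2⟩) ∧ (g sm).re - a = 0 := by
    intro m
    have hab : t ⟨m.1, hlt1 m.1 m.2⟩ < t ⟨m.1+1, hlt2 m.1 m.2⟩ :=
      ht_mono (by simp [Fin.lt_def])
    obtain ⟨sm, hsm, hsm'⟩ := exists_hasDerivAt_eq_zero hab
      (fun x _ => (hF' x).continuousAt.continuousWithinAt)
      (by rw [hFz, hFz]) (fun x _ => hF' x)
    exact ⟨sm, hsm, hsm'⟩
  choose s hs hsa using H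
  have hs0 : ∀ m, 0 < s m := fun m => lt_of_le_of_lt (ht_nonneg _) (hs m).1
  have hsT : ∀ m, s m < T := fun m => lt_trans (hs m).2 (ht_lt _)
  have hsmono : StrictMono s := by
    intro m m' hmm'
    calc s m < t ⟨m.1+1, hlt2 m.1 m.2⟩ := (hs m).2
      _ ≤ t ⟨m'.1, hlt1 m'.1 m'.2⟩ := ht_mono.monotone (by
          simp only [Fin.mk_le_mk]; exact Fin.lt_def.mp hmm')
      _ < s m' := (hs m').1
  -- reality of g at real points
  have hgreal : ∀ u : ℝ, (starRingEnd ℂ) (g u) = g u := by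
    intro u
    have hb : ∀ k ∈ Finset.Icc (-(K:ℤ)) (K:ℤ),
        (fun k : ℤ => Complex.I * k * (ω:ℂ) * c k) (-k)
          = (starRingEnd ℂ) ((fun k : ℤ => Complex.I * k * (ω:ℂ) * c k) k) := by
      intro k hk
      simp only []
      rw [map_mul, map_mul, map_mul, hconj k hk]
      simp only [Complex.conj_I, Complex.conj_ofReal, map_intCast]
      push_cast
      ring
    have := conj_trig_sum K (fun k : ℤ => Complex.I * k * (ω:ℂ) * c k) hb ω u
    simpa [hgdef, hS] using this
  have hga : ∀ m, g (s m) = (a:ℂ) := by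
    intro m
    have h1 : ((g (s m)).re : ℂ) = g (s m) := Complex.conj_eq_iff_re.mp (hgreal (s m))
    have h2 : (g (s m)).re = a := by have := hsa m; linarith
    rw [← h1, h2]
  -- build coefficients B and nodes z
  set B : ℤ → ℂ := fun k => if k = 0 then -(a:ℂ) else Complex.I * k * (ω:ℂ) * c k with hB
  set z : Fin (2*K+1) → ℂ := fun m => Complex.exp (Complex.I * (ω:ℂ) * ((s m : ℝ):ℂ)) with hz
  have hz0 : ∀ m, z m ≠ 0 := fun m => Complex.exp_ne_zero _
  have hinj : Function.Injective z := by
    intro m m' h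
    rw [hz] at h
    simp only [] at h
    rw [Complex.exp_eq_exp_iff_exists_int] at h
    obtain ⟨n, hn⟩ := h
    have him : ω * s m = ω * s m' + n * (2*Real.pi) := by
      have := congrArg Complex.im hn
      simpa [Complex.add_im, Complex.mul_im, Complex.mul_re] using this
    have b1 : 0 < ω * s m := mul_pos hω0 (hs0 m)
    have b2 : ω * s m < 2*Real.pi := by
      calc ω * s m < ω * T := by exact (mul_lt_mul_iff_right₀ hω0).mpr (hsT m)
        _ = 2*Real.pi := hωT
    have b3 : 0 < ω * s m' := mul_pos hω0 (hs0 m')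
    have b4 : ω * s m' < 2*Real.pi := by
      calc ω * s m' < ω * T := by exact (mul_lt_mul_iff_right₀ hω0).mpr (hsT m')
        _ = 2*Real.pi := hωT
    have hn0 : n = 0 := by
      have hr1 : (-1 : ℝ) < (n:ℝ) := by nlinarith
      have hr2 : ((n:ℝ)) < 1 := by nlinarith
      have : (-1:ℤ) < n := by exact_mod_cast hr1
      have : n < 1 := by exact_mod_cast hr2
      omega
    rw [hn0] at him
    simp only [Int.cast_zero, zero_mul, add_zero] at him
    have hss : s m = s m' := mul_left_cancel₀ hω0.ne' him
    exact hsmono.injective hss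
  have hvan : ∀ m, ∑ k ∈ Finset.Icc (-(K:ℤ)) (K:ℤ), B k * (z m) ^ k = 0 := by
    intro m
    have hexp : ∀ k : ℤ, (z m) ^ k = Complex.exp (Complex.I * k * (ω:ℂ) * ((s m : ℝ):ℂ)) := by
      intro k
      rw [hz]
      simp only []
      rw [← Complex.exp_int_mul]
      congr 1
      ring
    have step1 : ∀ k ∈ S, B k * (z m) ^ k
        = (Complex.I * k * (ω:ℂ) * c k) * Complex.exp (Complex.I * k * (ω:ℂ) * ((s m : ℝ):ℂ))
          + (if k = 0 then -(a:ℂ) else 0) := by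
      intro k hk
      rw [hexp k, hB]
      by_cases h0 : k = 0
      · subst h0; simp
      · simp [h0]
    calc ∑ k ∈ Finset.Icc (-(K:ℤ)) (K:ℤ), B k * (z m) ^ k
        = ∑ k ∈ S, ((Complex.I * k * (ω:ℂ) * c k)
            * Complex.exp (Complex.I * k * (ω:ℂ) * ((s m : ℝ):ℂ))
            + (if k = 0 then -(a:ℂ) else 0)) := Finset.sum_congr (by rw [hS]) step1
      _ = g (s m) + ∑ k ∈ S, (if k = 0 then -(a:ℂ) else 0) := by
          rw [Finset.sum_add_distrib, hgdef]
      _ = (a:ℂ) + -(a:ℂ) := by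
          rw [hga m, Finset.sum_ite_eq' S 0 (fun _ => -(a:ℂ)), if_pos h0S]
      _ = 0 := by ring
  have hBz := trig_vanish_s4 K B z hz0 hinj hvan
  have ha : a = 0 := by
    have := hBz 0 (by rw [← hS]; exact h0S)
    simp only [hB, if_pos rfl, neg_eq_zero, Complex.ofReal_eq_zero] at this
    exact this
  have hck : ∀ k ∈ Finset.Icc (-(K:ℤ)) (K:ℤ), k ≠ 0 → c k = 0 := by
    intro k hk hk0
    have := hBz k hk
    simp only [hB, hk0, if_false] at this
    have hI : (Complex.I : ℂ) ≠ 0 := Complex.I_ne_zero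
    have hkc : (k:ℂ) ≠ 0 := Int.cast_ne_zero.mpr hk0
    have hωc : ((ω:ℝ):ℂ) ≠ 0 := by
      simp only [ne_eq, Complex.ofReal_eq_zero]
      exact hω0.ne'
    rcases mul_eq_zero.mp this with h | h
    · rcases mul_eq_zero.mp h with h' | h'
      · rcases mul_eq_zero.mp h' with h'' | h''
        · exact absurd h'' hI
        · exact absurd h'' hkc
      · exact absurd h' hωc
    · exact h
  refine ⟨ha, hck, ?_⟩
  have h0N : (0:ℕ) < N := by omega
  have hft := hagree ⟨0, h0N⟩
  rw [hf] at hft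
  rw [Finset.sum_eq_single (0:ℤ)] at hft
  · simp only [Int.cast_zero, mul_zero, zero_mul, Complex.exp_zero, mul_one] at hft
    rw [hft, ha]
    push_cast
    ring
  · intro k hk hk0
    rw [hck k (by rw [hS] at hk; exact hk) hk0]
    ring
  · intro h
    exact absurd h0S h
end

section
/- Let K be a positive integer, T > 0, ω₀ = 2π/T, and let f(t) = Σ_{k=−K}^{K} c_k e^{i k ω₀ t} with complex coefficients satisfying c_{−k} = conj(c_k) for all k (so f is a real-valued trigonometric polynomial of degree K and period T). Let a, d ∈ ℝ with a ≠ 0. Then the set {t ∈ (0, T] : f(t) = a t + d} contains at most 2K + 1 points. -/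
open Complex Polynomial Finset

/-- Injectivity of `u ↦ exp (I ω u)` on a window of length `T`, `ω = 2π/T`. -/
lemma trig_aux_exp_inj {T : ℝ} (hT : 0 < T) {u v : ℝ}
    (hu : u ∈ Set.Ioc 0 T) (hv : v ∈ Set.Ioc 0 T)
    (h : Complex.exp (Complex.I * ((2 * Real.pi / T : ℝ) : ℂ) * u) =
      Complex.exp (Complex.I * ((2 * Real.pi / T : ℝ) : ℂ) * v)) : u = v := by
  obtain ⟨n, hn⟩ := Complex.exp_eq_exp_iff_exists_int.mp h
  have him := congrArg Complex.im hn
  simp [Complex.mul_im, Complex.add_im, Real.pi_ne_zero] at him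
  -- him : 2 * π / T * u = 2 * π / T * v + n * (2 * π)
  have hpi := Real.pi_pos
  have hnT : u - v = n * T := by
    field_simp at him
    nlinarith [Real.pi_ne_zero]
  have h1 : |u - v| < T := by
    rw [abs_sub_lt_iff]
    constructor <;> linarith [hu.1, hu.2, hv.1, hv.2]
  rw [hnT, abs_mul, abs_of_pos hT] at h1
  have h2 : |(n : ℝ)| < 1 := by nlinarith [abs_nonneg ((n : ℝ))]
  have hn0 : n = 0 := by
    have h3 : |n| < 1 := by exact_mod_cast h2
    rw [abs_lt] at h3
    omega
  subst hn0
  simp at hnT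
  linarith

/-- **Case 2 of the appendix argument.** A real trigonometric polynomial of degree `K`
and period `T` intersects a straight line of nonzero slope at most `2K + 1` times within
one period `(0, T]`. Formally: every finite set of such intersection points has
cardinality at most `2K + 1`. -/
theorem trig_poly_line_intersections
    (K : ℕ) (hK : 0 < K) (T : ℝ) (hT : 0 < T)
    (c : ℤ → ℂ)
    (hconj : ∀ k : ℤ, k ∈ Finset.Icc (-(K : ℤ)) (K : ℤ) →
      c (-k) = (starRingEnd ℂ) (c k))
    (f : ℝ → ℂ)
    (hf : ∀ u : ℝ, f u = ∑ k ∈ Finset.Icc (-(K : ℤ)) (K : ℤ),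
      c k * Complex.exp (Complex.I * (k : ℂ) * ((2 * Real.pi / T : ℝ) : ℂ) * (u : ℂ)))
    (a d : ℝ) (ha : a ≠ 0) :
    ∀ s : Finset ℝ, (∀ u ∈ s, u ∈ Set.Ioc 0 T ∧ f u = ((a * u + d : ℝ) : ℂ)) →
      s.card ≤ 2 * K + 1 := by
  intro s hs
  by_contra hcard
  push_neg at hcard
  have hN : 2 * K + 2 ≤ s.card := hcard
  set ω : ℝ := 2 * Real.pi / T with hωdef
  have hωpos : 0 < ω := by
    have := Real.pi_pos
    positivity
  set A : ℤ → ℂ := fun k => Complex.I * (k : ℂ) * (ω : ℂ) with hA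
  have hf' : ∀ u : ℝ, f u = ∑ k ∈ Finset.Icc (-(K : ℤ)) (K : ℤ),
      c k * Complex.exp (A k * u) := hf
  set D : ℝ → ℂ := fun u => ∑ k ∈ Finset.Icc (-(K : ℤ)) (K : ℤ),
      A k * c k * Complex.exp (A k * u) with hD
  -- derivative of f
  have hfD : ∀ u : ℝ, HasDerivAt f (D u) u := by
    intro u
    have h1 : HasDerivAt (fun u : ℝ => ∑ k ∈ Finset.Icc (-(K : ℤ)) (K : ℤ),
        c k * Complex.exp (A k * u)) (D u) u := by
      apply HasDerivAt.fun_sum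
      intro k _
      have h2 : HasDerivAt (fun z : ℂ => Complex.exp (A k * z))
          (Complex.exp (A k * u) * (A k * 1)) (u : ℂ) :=
        ((hasDerivAt_id (u : ℂ)).const_mul (A k)).cexp
      have h3 := (h2.comp_ofReal).const_mul (c k)
      convert h3 using 1
      · rfl
      · ring
    have : f = fun u : ℝ => ∑ k ∈ Finset.Icc (-(K : ℤ)) (K : ℤ),
        c k * Complex.exp (A k * u) := funext hf'
    rw [this]
    exact h1
  -- D takes real values
  have hDconj : ∀ u : ℝ, (starRingEnd ℂ) (D u) = D u := by
    intro u
    rw [hD]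
    rw [map_sum]
    have step1 : ∀ k ∈ Finset.Icc (-(K : ℤ)) (K : ℤ),
        (starRingEnd ℂ) (A k * c k * Complex.exp (A k * u)) =
        A (-k) * c (-k) * Complex.exp (A (-k) * u) := by
      intro k hk
      have hck : (starRingEnd ℂ) (c k) = c (-k) := (hconj k hk).symm
      rw [map_mul, map_mul, ← Complex.exp_conj]
      rw [hck]
      have hAk : (starRingEnd ℂ) (A k) = A (-k) := by
        simp only [hA, map_mul, Complex.conj_I, Complex.conj_ofReal, map_intCast]
        push_cast
        ring
      rw [hAk, map_mul, hAk]
      have : (starRingEnd ℂ) (u : ℂ) = (u : ℂ) := Complex.conj_ofReal u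
      rw [this]
    rw [Finset.sum_congr rfl step1]
    apply Finset.sum_nbij' (fun k => -k) (fun k => -k)
    · intro k hk; simp at hk ⊢; omega
    · intro k hk; simp at hk ⊢; omega
    · intro k _; ring
    · intro k _; ring
    · intro k _; simp
  have hDre : ∀ u : ℝ, D u = (((D u).re : ℝ) : ℂ) :=
    fun u => (Complex.conj_eq_iff_re.mp (hDconj u)).symm
  -- derivative of real part
  have hFD : ∀ u : ℝ, HasDerivAt (fun u : ℝ => (f u).re) ((D u).re) u := by
    intro u
    have h3 := (Complex.reCLM.hasFDerivAt.comp u (hfD u).hasFDerivAt).hasDerivAt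
    simp at h3
    exact h3
  -- ordered points
  set t : Fin (2 * K + 2) → ℝ := fun i => s.orderEmbOfCardLe hN i with ht
  have htmem : ∀ i, t i ∈ Set.Ioc 0 T ∧ f (t i) = ((a * t i + d : ℝ) : ℂ) :=
    fun i => hs _ (s.orderEmbOfCardLe_mem hN i)
  have htmono : StrictMono t := fun i j hij => (s.orderEmbOfCardLe hN).strictMono hij
  -- MVT
  have key : ∀ i : Fin (2 * K + 1), ∃ ξ,
      ξ ∈ Set.Ioo (t i.castSucc) (t i.succ) ∧ (D ξ).re = a := by
    intro i
    have hlt : t i.castSucc < t i.succ := htmono Fin.castSucc_lt_succ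
    obtain ⟨ξ, hξ, hval⟩ := exists_hasDerivAt_eq_slope (fun u => (f u).re)
      (fun u => (D u).re) hlt
      (fun u _ => ((hFD u).continuousAt).continuousWithinAt)
      (fun u _ => hFD u)
    refine ⟨ξ, hξ, ?_⟩
    rw [hval]
    have e1 : (f (t i.succ)).re = a * t i.succ + d := by
      rw [(htmem i.succ).2]; simp
    have e2 : (f (t i.castSucc)).re = a * t i.castSucc + d := by
      rw [(htmem i.castSucc).2]; simp
    rw [e1, e2, div_eq_iff (sub_ne_zero_of_ne hlt.ne')]
    ring
  choose ξ hξmem hξval using key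
  -- ξ values are strictly monotone and in (0, T]
  have hξmono : StrictMono ξ := by
    intro i j hij
    calc ξ i < t i.succ := (hξmem i).2
      _ ≤ t j.castSucc := htmono.monotone (by
          rw [Fin.le_def, Fin.val_succ, Fin.coe_castSucc]
          exact Fin.lt_def.mp hij)
      _ < ξ j := (hξmem j).1
  have hξIoc : ∀ i, ξ i ∈ Set.Ioc 0 T := by
    intro i
    constructor
    · have h0 : (0 : ℝ) < t i.castSucc :=
        lt_of_lt_of_le (htmem i.castSucc).1.1 le_rfl
      exact lt_trans h0 (hξmem i).1
    · exact le_of_lt (lt_of_lt_of_le (hξmem i).2 (htmem i.succ).1.2)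
  -- D ξ i = a (as complex numbers)
  have hDξ : ∀ i, D (ξ i) = (a : ℂ) := by
    intro i
    rw [hDre (ξ i), hξval i]
  -- the polynomial
  set b : ℤ → ℂ := fun k => A k * c k - (if k = 0 then (a : ℂ) else 0) with hb
  set p : Polynomial ℂ := ∑ k ∈ Finset.Icc (-(K : ℤ)) (K : ℤ),
      Polynomial.C (b k) * Polynomial.X ^ (k + K).toNat with hp
  have hpcoeff : p.coeff K = -a := by
    rw [hp, Polynomial.finset_sum_coeff]
    rw [Finset.sum_eq_single (0 : ℤ)]
    · have h00 : ((0 : ℤ) + K).toNat = K := by omega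
      rw [h00, Polynomial.coeff_C_mul, Polynomial.coeff_X_pow, if_pos rfl, mul_one]
      have hb0 : b 0 = -↑a := by
        simp only [hb]
        have hA0 : A 0 = 0 := by simp [hA]
        rw [hA0]
        simp
      exact hb0
    · intro k hk hne
      simp only [Finset.mem_Icc] at hk
      rw [Polynomial.coeff_C_mul, Polynomial.coeff_X_pow, if_neg (by omega), mul_zero]
    · intro h
      exfalso; apply h
      simp only [Finset.mem_Icc]
      omega
  have hpne : p ≠ 0 := by
    intro h0
    rw [h0, Polynomial.coeff_zero] at hpcoeff
    have h1 : (a : ℂ) = 0 := by linear_combination hpcoeff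
    exact ha (by exact_mod_cast h1)
  have hdeg : p.natDegree ≤ 2 * K := by
    apply Polynomial.natDegree_sum_le_of_forall_le
    intro k hk
    simp only [Finset.mem_Icc] at hk
    calc (Polynomial.C (b k) * Polynomial.X ^ (k + K).toNat).natDegree
        ≤ (Polynomial.X ^ (k + K).toNat : Polynomial ℂ).natDegree :=
          Polynomial.natDegree_C_mul_le _ _
      _ = (k + K).toNat := Polynomial.natDegree_X_pow _
      _ ≤ 2 * K := by omega
  -- evaluation identity
  have hz : ∀ u : ℝ, p.eval (Complex.exp (Complex.I * (ω : ℂ) * u)) =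
      Complex.exp ((K : ℂ) * (Complex.I * (ω : ℂ) * u)) * (D u - a) := by
    intro u
    set E : ℂ := Complex.exp ((K : ℂ) * (Complex.I * (ω : ℂ) * u)) with hE
    rw [hp, Polynomial.eval_finset_sum]
    simp only [Polynomial.eval_mul, Polynomial.eval_C, Polynomial.eval_pow,
      Polynomial.eval_X]
    have step : ∀ k ∈ Finset.Icc (-(K : ℤ)) (K : ℤ),
        b k * Complex.exp (Complex.I * (ω : ℂ) * u) ^ (k + K).toNat =
        A k * c k * Complex.exp (A k * u) * E - (if k = 0 then (a : ℂ) else 0) * E := by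
      intro k hk
      simp only [Finset.mem_Icc] at hk
      have hpow : Complex.exp (Complex.I * (ω : ℂ) * u) ^ (k + K).toNat =
          Complex.exp (A k * u) * E := by
        rw [← Complex.exp_nat_mul]
        rw [hE, ← Complex.exp_add]
        congr 1
        have hcast : (((k + K).toNat : ℕ) : ℂ) = (k : ℂ) + (K : ℂ) := by
          have h1 : ((k + K).toNat : ℤ) = k + K := Int.toNat_of_nonneg (by omega)
          calc (((k + K).toNat : ℕ) : ℂ) = (((k + K).toNat : ℤ) : ℂ) := by push_cast; ring
            _ = ((k + K : ℤ) : ℂ) := by rw [h1]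
            _ = (k : ℂ) + (K : ℂ) := by push_cast; ring
        rw [hcast, hA]
        ring
      rw [hpow]
      simp only [hb]
      by_cases h0 : k = 0
      · subst h0
        have hA0 : A 0 * (u : ℂ) = 0 := by simp [hA]
        rw [hA0, Complex.exp_zero, if_pos rfl]
        ring
      · rw [if_neg h0]
        ring
    rw [Finset.sum_congr rfl step, Finset.sum_sub_distrib]
    have hif : ∑ k ∈ Finset.Icc (-(K : ℤ)) (K : ℤ),
        (if k = 0 then (a : ℂ) else 0) * E = (a : ℂ) * E := by
      simp only [ite_mul, zero_mul]
      rw [Finset.sum_ite_eq' (Finset.Icc (-(K : ℤ)) (K : ℤ)) (0 : ℤ) (fun _ => (a : ℂ) * E)]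
      rw [if_pos (by simp only [Finset.mem_Icc]; omega)]
    rw [hif]
    have hDu : D u = ∑ k ∈ Finset.Icc (-(K : ℤ)) (K : ℤ),
        A k * c k * Complex.exp (A k * u) := by rw [hD]
    rw [hDu, mul_sub, Finset.mul_sum]
    congr 1
    · exact Finset.sum_congr rfl fun k _ => by ring
    · ring
  -- the roots
  set z : Fin (2 * K + 1) → ℂ := fun i => Complex.exp (Complex.I * (ω : ℂ) * (ξ i)) with hzdef
  have hzroot : ∀ i, z i ∈ p.roots := by
    intro i
    rw [Polynomial.mem_roots']
    refine ⟨hpne, ?_⟩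
    show p.eval (z i) = 0
    rw [hzdef]
    rw [hz (ξ i), hDξ i]
    simp
  have hzinj : Function.Injective z := by
    intro i j hij
    apply hξmono.injective
    exact trig_aux_exp_inj hT (hξIoc i) (hξIoc j) hij
  have hcard2 : (Finset.univ.image z).card = 2 * K + 1 := by
    rw [Finset.card_image_of_injective _ hzinj, Finset.card_univ, Fintype.card_fin]
  have hsub : Finset.univ.image z ⊆ p.roots.toFinset := by
    intro x hx
    simp only [Finset.mem_image] at hx
    obtain ⟨i, _, rfl⟩ := hx
    rw [Multiset.mem_toFinset]
    exact hzroot i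
  have hle : 2 * K + 1 ≤ p.roots.toFinset.card := hcard2 ▸ Finset.card_le_card hsub
  have h2 : p.roots.toFinset.card ≤ Multiset.card p.roots := p.roots.toFinset_card_le
  have h3 := p.card_roots'
  omega
end

section
/- Let y : ℝ → ℝ be measurable with |y(t)| ≤ c for all t, where 0 < c < b, let κ > 0, δ > 0, T > 0, and let K be a positive integer. Suppose t₀ = 0 < t₁ < t₂ < ⋯ is a sequence of real numbers such that (1/κ) ∫_{t_n}^{t_{n+1}} (y(s) + b) ds = δ for every n ≥ 0, and suppose the minimum firing-rate condition (b − c)/(κδ) ≥ (2K + 2)/T holds. Then t_{2K+2} ≤ T; in particular, at least N = 2K + 2 firing instants t₁ < t₂ < ⋯ < t_{2K+2} lie in the interval (0, T]. -/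
open MeasureTheory

/-- **Minimum firing-rate condition.** If the IF-TEM parameters satisfy
`(b - c)/(κδ) ≥ (2K + 2)/T`, then starting from `t₀ = 0` the IF-TEM fires at least
`2K + 2` times in the interval `(0, T]`, i.e. `t_{2K+2} ≤ T`. -/
theorem iftem_min_firing_rate
    (y : ℝ → ℝ) (hy_meas : Measurable y)
    (b c κ δ T : ℝ) (hc : 0 < c) (hcb : c < b) (hκ : 0 < κ) (hδ : 0 < δ) (hT : 0 < T)
    (K : ℕ) (hK : 0 < K)
    (hy_bdd : ∀ u : ℝ, |y u| ≤ c)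
    (t : ℕ → ℝ) (ht0 : t 0 = 0) (ht_mono : StrictMono t)
    (hfire : ∀ n : ℕ, (1 / κ) * ∫ s in (t n)..(t (n + 1)), (y s + b) = δ)
    (hrate : (b - c) / (κ * δ) ≥ (2 * (K : ℝ) + 2) / T) :
    t (2 * K + 2) ≤ T := by
  have hbc : 0 < b - c := by linarith
  -- integrability
  have hint : ∀ a a' : ℝ, IntervalIntegrable (fun s => y s + b) volume a a' := by
    intro a a'
    rw [intervalIntegrable_iff]
    have hconst : IntegrableOn (fun _ : ℝ => c + |b|) (Set.uIoc a a') volume := by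
      exact integrableOn_const measure_Ioc_lt_top.ne
    refine hconst.mono' ?_ ?_
    · exact (hy_meas.add measurable_const).aestronglyMeasurable.restrict
    · filter_upwards with s
      have := hy_bdd s
      have : |y s + b| ≤ |y s| + |b| := abs_add_le _ _
      have := hy_bdd s
      calc ‖y s + b‖ ≤ |y s| + |b| := abs_add_le _ _
        _ ≤ c + |b| := by linarith [hy_bdd s]
  -- each gap is ≤ κδ/(b-c)
  have hgap : ∀ n : ℕ, t (n + 1) - t n ≤ κ * δ / (b - c) := by
    intro n
    have hle : t n ≤ t (n + 1) := (ht_mono (Nat.lt_succ_self n)).le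
    have hmono : (b - c) * (t (n + 1) - t n) ≤ ∫ s in (t n)..(t (n + 1)), (y s + b) := by
      have h1 : ∫ s in (t n)..(t (n + 1)), (b - c) ≤ ∫ s in (t n)..(t (n + 1)), (y s + b) := by
        apply intervalIntegral.integral_mono_on hle intervalIntegrable_const (hint _ _)
        intro s _
        have := abs_le.1 (hy_bdd s)
        linarith [this.1]
      rw [intervalIntegral.integral_const] at h1
      simp only [smul_eq_mul] at h1
      linarith [h1]
    have hval : ∫ s in (t n)..(t (n + 1)), (y s + b) = κ * δ := by
      have := hfire n
      field_simp at this
      linarith [this]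
    rw [hval] at hmono
    rw [le_div_iff₀ hbc]
    linarith [hmono]
  -- t n ≤ n * (κδ/(b-c))
  have hbound : ∀ n : ℕ, t n ≤ n * (κ * δ / (b - c)) := by
    intro n
    induction n with
    | zero => simp [ht0]
    | succ m ih =>
      have := hgap m
      push_cast
      linarith
  have h2 := hbound (2 * K + 2)
  have hcast : ((2 * K + 2 : ℕ) : ℝ) = 2 * (K : ℝ) + 2 := by push_cast; ring
  rw [hcast] at h2
  -- rate condition: (2K+2) * κδ/(b-c) ≤ T
  have hκδ : 0 < κ * δ := mul_pos hκ hδ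
  have hrate' : (2 * (K : ℝ) + 2) * (κ * δ / (b - c)) ≤ T := by
    rw [ge_iff_le, div_le_div_iff₀ (by positivity) hκδ] at hrate
    have key : κ * δ / (b - c) * (b - c) = κ * δ := div_mul_cancel₀ _ hbc.ne'
    nlinarith [hrate, key]
  linarith
end

section
/- Let T > 0, ω₀ = 2π/T, let 𝒦 ⊂ ℤ be a finite set, and let g : ℝ → ℂ be the sum-of-sincs kernel defined by g(t) = Σ_{k∈𝒦} e^{i k ω₀ t} for t ∈ (−T/2, T/2] and g(t) = 0 otherwise. Let x : ℝ → ℂ be T-periodic and Lebesgue integrable on [0, T]. Then for every t ∈ ℝ, the convolution (x * g)(t) = ∫_ℝ x(τ) g(t − τ) dτ satisfies (x * g)(t) = Σ_{k∈𝒦} (∫_0^T x(τ) e^{−i k ω₀ τ} dτ) e^{i k ω₀ t}. -/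
open MeasureTheory

private lemma ii_cast {f : ℝ → ℂ} {a b a' b' : ℝ} (ha : a = a') (hb : b = b')
    (h : IntervalIntegrable f volume a b) : IntervalIntegrable f volume a' b' := by
  rw [← ha, ← hb]; exact h

lemma periodic_intervalIntegrable_of_int
    {f : ℝ → ℂ} {T : ℝ} (hT : 0 < T) (hf : Function.Periodic f T)
    (h0 : IntervalIntegrable f volume 0 T) (a b : ℝ) :
    IntervalIntegrable f volume a b := by
  have shift : ∀ c d : ℝ, IntervalIntegrable f volume c d →
      IntervalIntegrable f volume (c + T) (d + T) := by
    intro c d h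
    have h1 := h.comp_add_right (-T)
    have h2 : (fun x : ℝ => f (x + -T)) = f := by
      funext y
      rw [← sub_eq_add_neg]
      exact hf.sub_eq y
    rwa [h2, sub_neg_eq_add, sub_neg_eq_add] at h1
  have shift' : ∀ c d : ℝ, IntervalIntegrable f volume c d →
      IntervalIntegrable f volume (c - T) (d - T) := by
    intro c d h
    have h1 := h.comp_add_right T
    have h2 : (fun x : ℝ => f (x + T)) = f := by
      funext y; exact hf y
    rwa [h2] at h1
  have piece : ∀ n : ℕ, IntervalIntegrable f volume ((n : ℝ) * T) ((n : ℝ) * T + T) := by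
    intro n
    induction n with
    | zero => simpa using h0
    | succ n ih =>
      exact ii_cast (by push_cast; ring) (by push_cast; ring) (shift _ _ ih)
  have pieceneg : ∀ n : ℕ,
      IntervalIntegrable f volume (-((n : ℝ) * T) - T) (-((n : ℝ) * T)) := by
    intro n
    induction n with
    | zero => exact ii_cast (by ring) (by ring) (shift' 0 T h0)
    | succ n ih =>
      exact ii_cast (by push_cast; ring) (by push_cast; ring) (shift' _ _ ih)
  have chain : ∀ n : ℕ, IntervalIntegrable f volume (-((n : ℝ) * T)) ((n : ℝ) * T) := by
    intro n
    induction n with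
    | zero => simp
    | succ n ih =>
      have L : IntervalIntegrable f volume (-(((n : ℕ) + 1 : ℝ) * T)) (-((n : ℝ) * T)) :=
        ii_cast (by push_cast; ring) rfl (pieceneg n)
      have R : IntervalIntegrable f volume ((n : ℝ) * T) (((n : ℕ) + 1 : ℝ) * T) :=
        ii_cast rfl (by push_cast; ring) (piece n)
      exact ii_cast (by push_cast; ring) (by push_cast; ring) ((L.trans ih).trans R)
  obtain ⟨n, hn⟩ := exists_nat_gt (max |a| |b| / T)
  have hnT : max |a| |b| ≤ (n : ℝ) * T := by
    rw [div_lt_iff₀ hT] at hn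
    linarith
  have h1 : -((n : ℝ) * T) ≤ (n : ℝ) * T := by
    have : 0 ≤ (n : ℝ) * T := by positivity
    linarith
  refine (chain n).mono_set (Set.uIcc_subset_uIcc ?_ ?_) <;>
    rw [Set.uIcc_of_le h1] <;> constructor
  · have := (abs_le.1 (le_trans (le_max_left |a| |b|) hnT)).1; linarith
  · exact (abs_le.1 (le_trans (le_max_left |a| |b|) hnT)).2
  · have := (abs_le.1 (le_trans (le_max_right |a| |b|) hnT)).1; linarith
  · exact (abs_le.1 (le_trans (le_max_right |a| |b|) hnT)).2

/-- **Alias-cancellation property of the sum-of-sincs kernel.** Filtering a `T`-periodic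
integrable signal `x` with the SoS kernel `g` retains exactly the Fourier-series
coefficients indexed by `𝒦` (scaled by `T`) and annihilates all others. -/
theorem sos_kernel_alias_cancellation
    (T : ℝ) (hT : 0 < T) (𝒦 : Finset ℤ)
    (g : ℝ → ℂ)
    (hg : ∀ u : ℝ, g u =
      if u ∈ Set.Ioc (-T / 2) (T / 2) then
        ∑ k ∈ 𝒦, Complex.exp (Complex.I * (k : ℂ) * ((2 * Real.pi / T : ℝ) : ℂ) * (u : ℂ))
      else 0)
    (x : ℝ → ℂ) (hx_per : ∀ u : ℝ, x (u + T) = x u)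
    (hx_int : IntegrableOn x (Set.Icc 0 T)) :
    ∀ u : ℝ, (∫ τ : ℝ, x τ * g (u - τ)) =
      ∑ k ∈ 𝒦,
        (∫ τ in (0 : ℝ)..T, x τ *
            Complex.exp (-Complex.I * (k : ℂ) * ((2 * Real.pi / T : ℝ) : ℂ) * (τ : ℂ)))
          * Complex.exp (Complex.I * (k : ℂ) * ((2 * Real.pi / T : ℝ) : ℂ) * (u : ℂ)) := by
  intro u
  have hc : ((2 * Real.pi / T : ℝ) : ℂ) * (T : ℂ) = 2 * (Real.pi : ℂ) := by
    have hT' : (T : ℂ) ≠ 0 := by exact_mod_cast hT.ne'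
    push_cast
    exact div_mul_cancel₀ _ hT'
  have hFper : ∀ k : ℤ, Function.Periodic
      (fun τ : ℝ => x τ * Complex.exp (-Complex.I * (k : ℂ) * ((2 * Real.pi / T : ℝ) : ℂ) * (τ : ℂ))) T := by
    intro k τ
    simp only
    rw [hx_per]
    congr 1
    have harg : -Complex.I * (k : ℂ) * ((2 * Real.pi / T : ℝ) : ℂ) * ((τ + T : ℝ) : ℂ) =
        -Complex.I * (k : ℂ) * ((2 * Real.pi / T : ℝ) : ℂ) * (τ : ℂ)
          + (-k : ℂ) * (2 * (Real.pi : ℂ) * Complex.I) := by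
      push_cast
      push_cast at hc
      linear_combination (-Complex.I * (k : ℂ)) * hc
    rw [harg, Complex.exp_add]
    have h1 : Complex.exp ((-k : ℂ) * (2 * (Real.pi : ℂ) * Complex.I)) = 1 := by
      simpa using Complex.exp_int_mul_two_pi_mul_I (-k)
    rw [h1, mul_one]
  have hx0 : IntervalIntegrable x volume 0 T := by
    rw [intervalIntegrable_iff_integrableOn_Ioc_of_le hT.le]
    exact hx_int.mono_set Set.Ioc_subset_Icc_self
  have hF0 : ∀ k : ℤ, IntervalIntegrable
      (fun τ : ℝ => x τ * Complex.exp (-Complex.I * (k : ℂ) * ((2 * Real.pi / T : ℝ) : ℂ) * (τ : ℂ)))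
      volume 0 T := by
    intro k
    exact hx0.mul_continuousOn (Continuous.continuousOn (by continuity))
  have hFint : ∀ k : ℤ, ∀ a b : ℝ, IntervalIntegrable
      (fun τ : ℝ => x τ * Complex.exp (-Complex.I * (k : ℂ) * ((2 * Real.pi / T : ℝ) : ℂ) * (τ : ℂ)))
      volume a b := fun k =>
    periodic_intervalIntegrable_of_int hT (hFper k) (hF0 k)
  have hab : u - T / 2 ≤ u + T / 2 := by linarith
  -- pointwise rewrite of the integrand
  have hpt : ∀ τ : ℝ, x τ * g (u - τ) =
      Set.indicator (Set.Ico (u - T / 2) (u + T / 2))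
        (fun τ => ∑ k ∈ 𝒦,
          x τ * Complex.exp (-Complex.I * (k : ℂ) * ((2 * Real.pi / T : ℝ) : ℂ) * (τ : ℂ))
            * Complex.exp (Complex.I * (k : ℂ) * ((2 * Real.pi / T : ℝ) : ℂ) * (u : ℂ))) τ := by
    intro τ
    rw [hg]
    by_cases hmem : τ ∈ Set.Ico (u - T / 2) (u + T / 2)
    · have hmem' : u - τ ∈ Set.Ioc (-T / 2) (T / 2) := by
        obtain ⟨h1, h2⟩ := hmem
        constructor <;> linarith
      rw [if_pos hmem', Set.indicator_of_mem hmem, Finset.mul_sum]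
      refine Finset.sum_congr rfl fun k _ => ?_
      have harg : Complex.I * (k : ℂ) * ((2 * Real.pi / T : ℝ) : ℂ) * ((u - τ : ℝ) : ℂ) =
          -Complex.I * (k : ℂ) * ((2 * Real.pi / T : ℝ) : ℂ) * (τ : ℂ)
            + Complex.I * (k : ℂ) * ((2 * Real.pi / T : ℝ) : ℂ) * (u : ℂ) := by
        push_cast
        ring
      rw [harg, Complex.exp_add]
      ring
    · have hmem' : u - τ ∉ Set.Ioc (-T / 2) (T / 2) := by
        rintro ⟨h1, h2⟩
        exact hmem ⟨by linarith, by linarith⟩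
      rw [if_neg hmem', Set.indicator_of_notMem hmem, mul_zero]
  have hbaT : u + T / 2 = (u - T / 2) + T := by ring
  calc (∫ τ : ℝ, x τ * g (u - τ))
      = ∫ τ in Set.Ico (u - T / 2) (u + T / 2),
          ∑ k ∈ 𝒦,
            x τ * Complex.exp (-Complex.I * (k : ℂ) * ((2 * Real.pi / T : ℝ) : ℂ) * (τ : ℂ))
              * Complex.exp (Complex.I * (k : ℂ) * ((2 * Real.pi / T : ℝ) : ℂ) * (u : ℂ)) := by
        rw [← integral_indicator measurableSet_Ico]
        exact integral_congr_ae (Filter.Eventually.of_forall hpt)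
    _ = ∫ τ in (u - T / 2)..(u + T / 2),
          ∑ k ∈ 𝒦,
            x τ * Complex.exp (-Complex.I * (k : ℂ) * ((2 * Real.pi / T : ℝ) : ℂ) * (τ : ℂ))
              * Complex.exp (Complex.I * (k : ℂ) * ((2 * Real.pi / T : ℝ) : ℂ) * (u : ℂ)) := by
        rw [integral_Ico_eq_integral_Ioo, ← integral_Ioc_eq_integral_Ioo, intervalIntegral.integral_of_le hab]
    _ = ∑ k ∈ 𝒦, ∫ τ in (u - T / 2)..(u + T / 2),
            x τ * Complex.exp (-Complex.I * (k : ℂ) * ((2 * Real.pi / T : ℝ) : ℂ) * (τ : ℂ))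
              * Complex.exp (Complex.I * (k : ℂ) * ((2 * Real.pi / T : ℝ) : ℂ) * (u : ℂ)) := by
        exact intervalIntegral.integral_finset_sum fun k _ => (hFint k _ _).mul_const _
    _ = ∑ k ∈ 𝒦,
          (∫ τ in (0 : ℝ)..T, x τ *
              Complex.exp (-Complex.I * (k : ℂ) * ((2 * Real.pi / T : ℝ) : ℂ) * (τ : ℂ)))
            * Complex.exp (Complex.I * (k : ℂ) * ((2 * Real.pi / T : ℝ) : ℂ) * (u : ℂ)) := by
        refine Finset.sum_congr rfl fun k _ => ?_
        rw [intervalIntegral.integral_mul_const]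
        congr 1
        have h := (hFper k).intervalIntegral_add_eq (u - T / 2) 0
        rw [zero_add, ← hbaT] at h
        exact h
end

section
/- Let T > 0, ω₀ = 2π/T, R > 0, and let h : ℝ → ℝ be a bounded measurable function with h(t) = 0 for all |t| ≥ R/2. Let a₁, …, a_L ∈ ℝ, τ₁, …, τ_L ∈ [0, T), and define the nonperiodic signal x̃(t) = Σ_{ℓ=1}^{L} a_ℓ h(t − τ_ℓ) and its T-periodization x(t) = Σ_{p∈ℤ} x̃(t − pT). Let 𝒦 ⊂ ℤ be finite, let g be the sum-of-sincs kernel g(t) = Σ_{k∈𝒦} e^{i k ω₀ t} for t ∈ (−T/2, T/2] and g(t) = 0 otherwise, and let S be a nonnegative integer with 2ST ≥ R + T. Define g̃(t) = Σ_{s=−S}^{S} g(t + sT). Then (x̃ * g̃)(t) = (x * g)(t) for every t ∈ [0, T). -/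
open MeasureTheory

/-- **Reduction of nonperiodic FRI sampling to the periodic case.** For a compactly
supported pulse, filtering the nonperiodic FRI signal with the periodized SoS kernel
`g̃` agrees on `[0, T)` with filtering the `T`-periodized signal with the SoS kernel
`g`. -/
theorem nonperiodic_fri_filtering_eq_periodic
    (T : ℝ) (hT : 0 < T) (R : ℝ) (hR : 0 < R)
    (h : ℝ → ℝ) (hh_meas : Measurable h) (hh_bdd : ∃ M : ℝ, ∀ u : ℝ, |h u| ≤ M)
    (hh_supp : ∀ u : ℝ, R / 2 ≤ |u| → h u = 0)
    (L : ℕ) (a : Fin L → ℝ) (τ : Fin L → ℝ) (hτ : ∀ ℓ, τ ℓ ∈ Set.Ico 0 T)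
    (xt : ℝ → ℝ) (hxt : ∀ u : ℝ, xt u = ∑ ℓ : Fin L, a ℓ * h (u - τ ℓ))
    (x : ℝ → ℝ) (hx : ∀ u : ℝ, x u = ∑' p : ℤ, xt (u - (p : ℝ) * T))
    (𝒦 : Finset ℤ)
    (g : ℝ → ℂ)
    (hg : ∀ u : ℝ, g u =
      if u ∈ Set.Ioc (-T / 2) (T / 2) then
        ∑ k ∈ 𝒦, Complex.exp (Complex.I * (k : ℂ) * ((2 * Real.pi / T : ℝ) : ℂ) * (u : ℂ))
      else 0)
    (S : ℕ) (hS : R + T ≤ 2 * (S : ℝ) * T)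
    (gt : ℝ → ℂ)
    (hgt : ∀ u : ℝ, gt u = ∑ s ∈ Finset.Icc (-(S : ℤ)) (S : ℤ), g (u + (s : ℝ) * T)) :
    ∀ u : ℝ, u ∈ Set.Ico 0 T →
      (∫ τ' : ℝ, (xt τ' : ℂ) * gt (u - τ')) = ∫ τ' : ℝ, (x τ' : ℂ) * g (u - τ') := by
  intro u hu
  obtain ⟨M, hM⟩ := hh_bdd
  have hM0 : 0 ≤ M := le_trans (abs_nonneg _) (hM 0)
  set A : ℝ := (∑ ℓ : Fin L, |a ℓ|) * M with hA
  set K : ℝ := (𝒦.card : ℝ) with hK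
  have hA0 : 0 ≤ A := mul_nonneg (Finset.sum_nonneg fun ℓ _ => abs_nonneg _) hM0
  have hK0 : 0 ≤ K := Nat.cast_nonneg _
  -- measurability
  have hxt_meas : Measurable xt := by
    have hxe : xt = fun v => ∑ ℓ : Fin L, a ℓ * h (v - τ ℓ) := funext hxt
    rw [hxe]
    exact Finset.measurable_sum _ fun ℓ _ =>
      measurable_const.mul (hh_meas.comp (measurable_id.sub measurable_const))
  have hg_meas : Measurable g := by
    have hge : g = fun v => Set.indicator (Set.Ioc (-T / 2) (T / 2))
        (fun v : ℝ => ∑ k ∈ 𝒦,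
          Complex.exp (Complex.I * (k : ℂ) * ((2 * Real.pi / T : ℝ) : ℂ) * (v : ℂ))) v := by
      funext v; rw [hg, Set.indicator_apply]
    rw [hge]
    refine Measurable.indicator ?_ measurableSet_Ioc
    exact Finset.measurable_sum _ fun k _ =>
      Complex.continuous_exp.measurable.comp (measurable_const.mul Complex.measurable_ofReal)
  -- bounds
  have hxt_bd : ∀ v : ℝ, |xt v| ≤ A := by
    intro v; rw [hxt]
    calc |∑ ℓ : Fin L, a ℓ * h (v - τ ℓ)| ≤ ∑ ℓ : Fin L, |a ℓ * h (v - τ ℓ)| :=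
          Finset.abs_sum_le_sum_abs _ _
      _ ≤ ∑ ℓ : Fin L, |a ℓ| * M := by
          refine Finset.sum_le_sum fun ℓ _ => ?_
          rw [abs_mul]
          exact mul_le_mul_of_nonneg_left (hM _) (abs_nonneg _)
      _ = A := by rw [hA, Finset.sum_mul]
  have hg_bd : ∀ v : ℝ, ‖g v‖ ≤ K := by
    intro v; rw [hg]
    split
    · refine (norm_sum_le _ _).trans ?_
      have h1 : ∀ k : ℤ,
          ‖Complex.exp (Complex.I * (k : ℂ) * ((2 * Real.pi / T : ℝ) : ℂ) * (v : ℂ))‖ = 1 := by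
        intro k
        rw [Complex.norm_exp]
        have : (Complex.I * (k : ℂ) * ((2 * Real.pi / T : ℝ) : ℂ) * (v : ℂ)).re = 0 := by
          simp [Complex.mul_re, Complex.mul_im]
        rw [this, Real.exp_zero]
      calc ∑ k ∈ 𝒦, ‖Complex.exp (Complex.I * (k : ℂ) * ((2 * Real.pi / T : ℝ) : ℂ) * (v : ℂ))‖
          = ∑ k ∈ 𝒦, (1 : ℝ) := Finset.sum_congr rfl fun k _ => h1 k
        _ ≤ K := le_of_eq (by simp [hK])
    · simpa using hK0
  -- supports
  have hg_zero : ∀ v : ℝ, v ∉ Set.Ioc (-T / 2) (T / 2) → g v = 0 := by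
    intro v hv; rw [hg, if_neg hv]
  have hxt_supp : ∀ v : ℝ, ¬(-(R / 2) < v ∧ v < T + R / 2) → xt v = 0 := by
    intro v hv
    rw [hxt]
    refine Finset.sum_eq_zero fun ℓ _ => ?_
    have hτℓ := hτ ℓ
    rw [Set.mem_Ico] at hτℓ
    have habs : R / 2 ≤ |v - τ ℓ| := by
      rcases not_and_or.mp hv with h1 | h2
      · push_neg at h1
        refine le_abs.mpr (Or.inr ?_)
        linarith [hτℓ.1]
      · push_neg at h2
        refine le_abs.mpr (Or.inl ?_)
        linarith [hτℓ.2]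
    rw [hh_supp _ habs, mul_zero]
  -- integrability
  have key_int : ∀ c d : ℝ,
      Integrable (fun t : ℝ => ((xt (t - c) : ℝ) : ℂ) * g (d - t)) := by
    intro c d
    have hmeas : AEStronglyMeasurable (fun t : ℝ => ((xt (t - c) : ℝ) : ℂ) * g (d - t)) volume :=
      ((Complex.measurable_ofReal.comp (hxt_meas.comp (measurable_id.sub measurable_const))).mul
        (hg_meas.comp (measurable_const.sub measurable_id))).aestronglyMeasurable
    refine Integrable.mono'
      (g := (Set.Icc (d - T / 2) (d + T / 2)).indicator fun _ => A * K) ?_ hmeas ?_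
    · rw [integrable_indicator_iff measurableSet_Icc]
      exact integrableOn_const measure_Icc_lt_top.ne
    · filter_upwards with t
      by_cases hmem : t ∈ Set.Icc (d - T / 2) (d + T / 2)
      · rw [Set.indicator_of_mem hmem, norm_mul, Complex.norm_real, Real.norm_eq_abs]
        exact mul_le_mul (hxt_bd _) (hg_bd _) (norm_nonneg _) hA0
      · rw [Set.indicator_of_notMem hmem]
        have hgz : g (d - t) = 0 := by
          refine hg_zero _ fun hc => hmem ?_
          rw [Set.mem_Ioc] at hc
          rw [Set.mem_Icc]
          constructor <;> linarith [hc.1, hc.2]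
        simp [hgz]
  -- key support claim
  have claimP : ∀ t : ℝ, g (u - t) ≠ 0 → ∀ p : ℤ,
      p ∉ Finset.Icc (-(S : ℤ)) (S : ℤ) → xt (t - (p : ℝ) * T) = 0 := by
    intro t hgne p hp
    refine hxt_supp _ fun hcon => ?_
    have hmem : u - t ∈ Set.Ioc (-T / 2) (T / 2) := by
      by_contra hc; exact hgne (hg_zero _ hc)
    rw [Set.mem_Ioc] at hmem
    rw [Set.mem_Ico] at hu
    rw [Finset.mem_Icc] at hp
    have hp1 : (p : ℝ) * T < ((S : ℝ) + 1) * T := by nlinarith [hcon.1, hmem.1, hu.2]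
    have hp2 : (-((S : ℝ) + 1)) * T < (p : ℝ) * T := by nlinarith [hcon.2, hmem.2, hu.1]
    have hb1 : (p : ℝ) < (S : ℝ) + 1 := lt_of_mul_lt_mul_right hp1 hT.le
    have hb2 : -((S : ℝ) + 1) < (p : ℝ) := lt_of_mul_lt_mul_right hp2 hT.le
    have hb1' : p < (S : ℤ) + 1 := by exact_mod_cast hb1
    have hb2' : -((S : ℤ) + 1) < p := by exact_mod_cast hb2
    omega
  -- LHS
  have stepL : (∫ t : ℝ, (xt t : ℂ) * gt (u - t))
      = ∑ s ∈ Finset.Icc (-(S : ℤ)) (S : ℤ),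
          ∫ t : ℝ, ((xt (t - (s : ℝ) * T) : ℝ) : ℂ) * g (u - t) := by
    have hfun : ∀ s : ℤ, (fun t : ℝ => (xt t : ℂ) * g (u - t + (s : ℝ) * T))
        = fun t : ℝ => ((xt (t - 0) : ℝ) : ℂ) * g ((u + (s : ℝ) * T) - t) := by
      intro s; funext t
      rw [sub_zero, show u - t + (s : ℝ) * T = (u + (s : ℝ) * T) - t from by ring]
    calc (∫ t : ℝ, (xt t : ℂ) * gt (u - t))
        = ∫ t : ℝ, ∑ s ∈ Finset.Icc (-(S : ℤ)) (S : ℤ),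
            (xt t : ℂ) * g (u - t + (s : ℝ) * T) := by
          simp only [hgt, Finset.mul_sum]
      _ = ∑ s ∈ Finset.Icc (-(S : ℤ)) (S : ℤ),
            ∫ t : ℝ, (xt t : ℂ) * g (u - t + (s : ℝ) * T) := by
          refine integral_finset_sum _ fun s _ => ?_
          rw [hfun s]
          exact key_int 0 (u + (s : ℝ) * T)
      _ = ∑ s ∈ Finset.Icc (-(S : ℤ)) (S : ℤ),
            ∫ t : ℝ, ((xt (t + (s : ℝ) * T) : ℝ) : ℂ) * g (u - t) := by
          refine Finset.sum_congr rfl fun s _ => ?_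
          have hfe : (fun t : ℝ => (xt t : ℂ) * g (u - t + (s : ℝ) * T))
              = fun t : ℝ => (fun w : ℝ => ((xt (w + (s : ℝ) * T) : ℝ) : ℂ) * g (u - w))
                  (t - (s : ℝ) * T) := by
            funext t
            simp only
            rw [show t - (s : ℝ) * T + (s : ℝ) * T = t from by ring,
              show u - (t - (s : ℝ) * T) = u - t + (s : ℝ) * T from by ring]
          rw [hfe]
          exact integral_sub_right_eq_self (μ := volume) (fun w : ℝ => ((xt (w + (s : ℝ) * T) : ℝ) : ℂ) * g (u - w)) ((s : ℝ) * T)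
      _ = ∑ s ∈ Finset.Icc (-(S : ℤ)) (S : ℤ),
            ∫ t : ℝ, ((xt (t - (s : ℝ) * T) : ℝ) : ℂ) * g (u - t) := by
          refine Finset.sum_equiv (Equiv.neg ℤ) ?_ ?_
          · intro i; simp [Finset.mem_Icc]; omega
          · intro i _
            have : (fun t : ℝ => ((xt (t - ((-i : ℤ) : ℝ) * T) : ℝ) : ℂ) * g (u - t))
                = fun t : ℝ => ((xt (t + (i : ℝ) * T) : ℝ) : ℂ) * g (u - t) := by
              funext t
              rw [Int.cast_neg, neg_mul, sub_neg_eq_add]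
            simp only [Equiv.neg_apply, this]
  -- RHS
  have stepR : (∫ t : ℝ, (x t : ℂ) * g (u - t))
      = ∑ p ∈ Finset.Icc (-(S : ℤ)) (S : ℤ),
          ∫ t : ℝ, ((xt (t - (p : ℝ) * T) : ℝ) : ℂ) * g (u - t) := by
    have hpt : ∀ t : ℝ, (x t : ℂ) * g (u - t)
        = ∑ p ∈ Finset.Icc (-(S : ℤ)) (S : ℤ),
            ((xt (t - (p : ℝ) * T) : ℝ) : ℂ) * g (u - t) := by
      intro t
      by_cases hgz : g (u - t) = 0
      · simp [hgz]
      · have hxeq : x t = ∑ p ∈ Finset.Icc (-(S : ℤ)) (S : ℤ), xt (t - (p : ℝ) * T) := by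
          rw [hx]
          exact tsum_eq_sum fun p hp => claimP t hgz p hp
        rw [hxeq]
        push_cast
        rw [Finset.sum_mul]
    simp only [hpt]
    exact integral_finset_sum _ fun p _ => key_int ((p : ℝ) * T) u
  rw [stepL, stepR]
end

section
/- Let T > 0, ω₀ = 2π/T, let L ≥ 1 be an integer, and let k₀ ∈ ℤ. Let τ₁, …, τ_L ∈ [0, T) be pairwise distinct, σ₁, …, σ_L ∈ [0, T) be pairwise distinct, and let a₁, …, a_L and b₁, …, b_L be nonzero complex numbers. If Σ_{ℓ=1}^{L} a_ℓ e^{−i k ω₀ τ_ℓ} = Σ_{ℓ=1}^{L} b_ℓ e^{−i k ω₀ σ_ℓ} for every integer k with k₀ ≤ k ≤ k₀ + 2L − 1, then there exists a permutation π of {1, …, L} such that σ_ℓ = τ_{π(ℓ)} and b_ℓ = a_{π(ℓ)} for all ℓ. -/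
open Finset Complex Matrix

private lemma vdm_fin {n : ℕ} (u : Fin n → ℂ) (hu : Function.Injective u) (c : Fin n → ℂ)
    (h : ∀ k : ℕ, k < n → ∑ j, c j * u j ^ k = 0) : ∀ j, c j = 0 := by
  have hdet : (Matrix.vandermonde u)ᵀ.det ≠ 0 := by
    rw [Matrix.det_transpose, Matrix.det_vandermonde]
    refine Finset.prod_ne_zero_iff.2 fun i _ => Finset.prod_ne_zero_iff.2 fun j hj => ?_
    exact sub_ne_zero.2 fun e => (Finset.mem_Ioi.1 hj).ne (hu e).symm
  have hM : (Matrix.vandermonde u)ᵀ.mulVec c = 0 := by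
    ext k
    have := h k k.2
    simpa [Matrix.mulVec, Matrix.vandermonde, dotProduct, mul_comm] using this
  have := Matrix.eq_zero_of_mulVec_eq_zero hdet hM
  exact fun j => congrFun this j

private lemma vdm_finset (s : Finset ℂ) (c : ℂ → ℂ)
    (h : ∀ k : ℕ, k < s.card → ∑ u ∈ s, c u * u ^ k = 0) : ∀ u ∈ s, c u = 0 := by
  classical
  set n := s.card with hn
  let e : s ≃ Fin n := s.equivFin
  let u' : Fin n → ℂ := fun j => ((e.symm j : s) : ℂ)
  have hu' : Function.Injective u' := by
    intro i j hij
    exact e.symm.injective (Subtype.ext hij)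
  have hsum : ∀ k : ℕ, ∑ j : Fin n, c (u' j) * u' j ^ k = ∑ u ∈ s, c u * u ^ k := by
    intro k
    rw [← Finset.sum_coe_sort s (fun u => c u * u ^ k)]
    exact Equiv.sum_comp e.symm (fun x => c ((x : s) : ℂ) * ((x : s) : ℂ) ^ k)
  have h0 : ∀ j, c (u' j) = 0 :=
    vdm_fin u' hu' (fun j => c (u' j)) (fun k hk => by rw [hsum]; exact h k hk)
  intro u hu
  have := h0 (e ⟨u, hu⟩)
  simpa [u', e.symm_apply_apply] using this

/-- **Spectral-estimation uniqueness.** `2L` consecutive samples of a sum of `L`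
complex exponentials with pairwise distinct nodes `e^{-i ω₀ τ_ℓ}` on the unit circle
uniquely determine the amplitudes and delays, up to a permutation. -/
theorem sum_of_exponentials_uniqueness
    (T : ℝ) (hT : 0 < T) (L : ℕ) (hL : 1 ≤ L) (k₀ : ℤ)
    (τ σ : Fin L → ℝ)
    (hτ_mem : ∀ ℓ, τ ℓ ∈ Set.Ico 0 T) (hσ_mem : ∀ ℓ, σ ℓ ∈ Set.Ico 0 T)
    (hτ_inj : Function.Injective τ) (hσ_inj : Function.Injective σ)
    (a b : Fin L → ℂ) (ha : ∀ ℓ, a ℓ ≠ 0) (hb : ∀ ℓ, b ℓ ≠ 0)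
    (hsamples : ∀ k : ℤ, k₀ ≤ k → k ≤ k₀ + 2 * (L : ℤ) - 1 →
      (∑ ℓ : Fin L, a ℓ *
          Complex.exp (-Complex.I * (k : ℂ) * ((2 * Real.pi / T : ℝ) : ℂ) * (τ ℓ : ℂ)))
        = ∑ ℓ : Fin L, b ℓ *
            Complex.exp (-Complex.I * (k : ℂ) * ((2 * Real.pi / T : ℝ) : ℂ) * (σ ℓ : ℂ))) :
    ∃ π : Equiv.Perm (Fin L), ∀ ℓ : Fin L, σ ℓ = τ (π ℓ) ∧ b ℓ = a (π ℓ) := by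
  classical
  set ω : ℝ := 2 * Real.pi / T with hω
  have hπpos : (0:ℝ) < Real.pi := Real.pi_pos
  have hω0 : ω ≠ 0 := by rw [hω]; positivity
  have hωT : ω * T = 2 * Real.pi := by rw [hω]; field_simp
  -- node map injectivity on [0, T)
  have node_inj : ∀ t₁ t₂ : ℝ, t₁ ∈ Set.Ico 0 T → t₂ ∈ Set.Ico 0 T →
      Complex.exp (-Complex.I * (ω : ℂ) * (t₁ : ℂ)) =
        Complex.exp (-Complex.I * (ω : ℂ) * (t₂ : ℂ)) → t₁ = t₂ := by
    intro t₁ t₂ h₁ h₂ he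
    rw [Complex.exp_eq_exp_iff_exists_int] at he
    obtain ⟨m, hm⟩ := he
    have h3 : ((ω * t₁ : ℝ) : ℂ) = ((ω * t₂ - (m : ℝ) * (2 * Real.pi) : ℝ) : ℂ) := by
      push_cast
      linear_combination Complex.I * hm +
        ((ω : ℂ) * t₁ - (ω : ℂ) * t₂ + (m : ℂ) * 2 * Real.pi) * Complex.I_sq
    have hr : ω * t₁ = ω * t₂ - (m : ℝ) * (2 * Real.pi) := by exact_mod_cast h3
    have ht : t₁ - t₂ = -(m : ℝ) * T := by
      have h5 : ω * (t₁ - t₂) = ω * (-(m : ℝ) * T) := by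
        linear_combination hr + (m : ℝ) * hωT
      exact mul_left_cancel₀ hω0 h5
    have hm0 : m = 0 := by
      have hb1 : -T < t₁ - t₂ := by
        have := h₁.1; have := h₂.2; linarith
      have hb2 : t₁ - t₂ < T := by
        have := h₁.2; have := h₂.1; linarith
      by_contra hne
      rcases lt_or_gt_of_ne hne with hlt | hgt
      · have hc : (m : ℝ) ≤ -1 := by exact_mod_cast (by omega : m ≤ -1)
        nlinarith
      · have hc : (1 : ℝ) ≤ (m : ℝ) := by exact_mod_cast hgt
        nlinarith
    rw [hm0] at ht
    have : t₁ - t₂ = 0 := by simpa using ht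
    linarith
  -- nodes
  set z : Fin L → ℂ := fun ℓ => Complex.exp (-Complex.I * (ω : ℂ) * (τ ℓ : ℂ)) with hz
  set w : Fin L → ℂ := fun ℓ => Complex.exp (-Complex.I * (ω : ℂ) * (σ ℓ : ℂ)) with hw
  have hz_inj : Function.Injective z := fun i j hij =>
    hτ_inj (node_inj _ _ (hτ_mem i) (hτ_mem j) hij)
  have hw_inj : Function.Injective w := fun i j hij =>
    hσ_inj (node_inj _ _ (hσ_mem i) (hσ_mem j) hij)
  have hz0 : ∀ ℓ, z ℓ ≠ 0 := fun ℓ => Complex.exp_ne_zero _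
  have hw0 : ∀ ℓ, w ℓ ≠ 0 := fun ℓ => Complex.exp_ne_zero _
  -- samples in terms of nodes
  have hpow : ∀ (k : ℤ) (t : ℝ),
      Complex.exp (-Complex.I * (k : ℂ) * (ω : ℂ) * (t : ℂ)) =
        Complex.exp (-Complex.I * (ω : ℂ) * (t : ℂ)) ^ k := by
    intro k t
    rw [← Complex.exp_int_mul]
    congr 1
    ring
  have hsamp' : ∀ k : ℤ, k₀ ≤ k → k ≤ k₀ + 2 * (L : ℤ) - 1 →
      ∑ ℓ : Fin L, a ℓ * z ℓ ^ k = ∑ ℓ : Fin L, b ℓ * w ℓ ^ k := by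
    intro k hk1 hk2
    have := hsamples k hk1 hk2
    simpa only [hpow, hz, hw] using this
  -- combined coefficient function
  set d : ℂ → ℂ := fun u =>
    (∑ ℓ ∈ univ.filter (fun ℓ => z ℓ = u), a ℓ)
      - ∑ ℓ ∈ univ.filter (fun ℓ => w ℓ = u), b ℓ with hd
  set s : Finset ℂ := (univ.image z) ∪ (univ.image w) with hs
  have hs0 : ∀ u ∈ s, u ≠ 0 := by
    intro u hu
    simp only [hs, mem_union, mem_image, mem_univ, true_and] at hu
    rcases hu with ⟨ℓ, rfl⟩ | ⟨ℓ, rfl⟩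
    · exact hz0 ℓ
    · exact hw0 ℓ
  have hscard : s.card ≤ 2 * L := by
    calc s.card ≤ (univ.image z).card + (univ.image w).card := card_union_le _ _
      _ ≤ L + L := by
          gcongr <;> simpa using card_image_le.trans (by simp)
      _ = 2 * L := by ring
  -- key sum identity
  have hkey : ∀ k : ℤ, k₀ ≤ k → k ≤ k₀ + 2 * (L : ℤ) - 1 →
      ∑ u ∈ s, d u * u ^ k = 0 := by
    intro k hk1 hk2
    have hmapz : ∀ ℓ ∈ (univ : Finset (Fin L)), z ℓ ∈ s := by
      intro ℓ _; simp [hs, mem_union, mem_image]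
    have hmapw : ∀ ℓ ∈ (univ : Finset (Fin L)), w ℓ ∈ s := by
      intro ℓ _; simp [hs, mem_union, mem_image]
    have e1 : ∑ u ∈ s, (∑ ℓ ∈ univ.filter (fun ℓ => z ℓ = u), a ℓ) * u ^ k
        = ∑ ℓ : Fin L, a ℓ * z ℓ ^ k := by
      rw [← Finset.sum_fiberwise_of_maps_to hmapz (fun ℓ => a ℓ * z ℓ ^ k)]
      refine Finset.sum_congr rfl fun u _ => ?_
      rw [Finset.sum_mul]
      refine Finset.sum_congr rfl fun ℓ hℓ => ?_
      rw [(Finset.mem_filter.1 hℓ).2]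
    have e2 : ∑ u ∈ s, (∑ ℓ ∈ univ.filter (fun ℓ => w ℓ = u), b ℓ) * u ^ k
        = ∑ ℓ : Fin L, b ℓ * w ℓ ^ k := by
      rw [← Finset.sum_fiberwise_of_maps_to hmapw (fun ℓ => b ℓ * w ℓ ^ k)]
      refine Finset.sum_congr rfl fun u _ => ?_
      rw [Finset.sum_mul]
      refine Finset.sum_congr rfl fun ℓ hℓ => ?_
      rw [(Finset.mem_filter.1 hℓ).2]
    have : ∑ u ∈ s, d u * u ^ k
        = (∑ ℓ : Fin L, a ℓ * z ℓ ^ k) - ∑ ℓ : Fin L, b ℓ * w ℓ ^ k := by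
      rw [← e1, ← e2, ← Finset.sum_sub_distrib]
      exact Finset.sum_congr rfl fun u _ => by rw [hd]; ring
    rw [this, hsamp' k hk1 hk2, sub_self]
  -- apply Vandermonde to shifted coefficients
  have hd0 : ∀ u ∈ s, d u = 0 := by
    have := vdm_finset s (fun u => d u * u ^ (k₀ : ℤ)) ?_
    · intro u hu
      have h1 := this u hu
      have h2 : (u : ℂ) ^ (k₀ : ℤ) ≠ 0 := zpow_ne_zero _ (hs0 u hu)
      exact (mul_eq_zero.1 h1).resolve_right h2
    · intro k hk
      have hk2L : (k : ℤ) < 2 * (L : ℤ) := by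
        exact_mod_cast lt_of_lt_of_le hk hscard
      have := hkey (k₀ + k) (by omega) (by omega)
      rw [← this]
      refine Finset.sum_congr rfl fun u hu => ?_
      rw [zpow_add₀ (hs0 u hu), zpow_natCast]
      ring
  -- extract matching
  have hmatch : ∀ ℓ : Fin L, ∃ m : Fin L, z m = w ℓ ∧ a m = b ℓ := by
    intro ℓ
    have hwin : w ℓ ∈ s := by simp [hs, mem_union, mem_image]
    have h1 : (∑ m ∈ univ.filter (fun m => z m = w ℓ), a m)
        - (∑ m ∈ univ.filter (fun m => w m = w ℓ), b m) = 0 := hd0 (w ℓ) hwin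
    have hwfilter : univ.filter (fun m => w m = w ℓ) = {ℓ} := by
      ext m
      simp only [mem_filter, mem_univ, true_and, mem_singleton]
      exact ⟨fun h => hw_inj h, fun h => by rw [h]⟩
    rw [hwfilter, Finset.sum_singleton, sub_eq_zero] at h1
    by_cases hne : (univ.filter (fun m => z m = w ℓ)).Nonempty
    · obtain ⟨m, hm⟩ := hne
      have hmz : z m = w ℓ := (Finset.mem_filter.1 hm).2
      have hzfilter : univ.filter (fun m' => z m' = w ℓ) = {m} := by
        ext m'
        simp only [mem_filter, mem_univ, true_and, mem_singleton]
        exact ⟨fun h => hz_inj (h.trans hmz.symm), fun h => by rw [h]; exact hmz⟩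
      rw [hzfilter, Finset.sum_singleton] at h1
      exact ⟨m, hmz, h1⟩
    · rw [Finset.not_nonempty_iff_eq_empty.1 hne, Finset.sum_empty] at h1
      exact absurd h1.symm (hb ℓ)
  choose f hf1 hf2 using hmatch
  have hf_inj : Function.Injective f := by
    intro i j hij
    apply hw_inj
    rw [← hf1 i, ← hf1 j, hij]
  have hf_bij : Function.Bijective f := (Finite.injective_iff_bijective).1 hf_inj
  refine ⟨Equiv.ofBijective f hf_bij, fun ℓ => ⟨?_, (hf2 ℓ).symm⟩⟩
  have : z (f ℓ) = w ℓ := hf1 ℓ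
  exact (node_inj _ _ (hσ_mem ℓ) (hτ_mem (f ℓ)) (this.symm)).symm ▸ rfl
end

section
/- Let K be a positive integer, T > 0, ω₀ = 2π/T, and let 0 ≤ t₁ < t₂ < ⋯ < t_N < T with N ≥ 2K + 2. Let V ∈ ℂ^{N×(2K+1)} be the matrix with rows indexed by n = 1, …, N and columns indexed by k = −K, …, K, with entries V[n, k] = e^{i k ω₀ t_n} for k ≠ 0 and V[n, 0] = t_n. If x ∈ ℂ^{2K+1} and c ∈ ℂ satisfy V x = c·𝟙_N (where 𝟙_N is the all-ones vector in ℂ^N), then x = 0 and c = 0. -/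
open Complex

private lemma expI_inj {T : ℝ} (hT : 0 < T) {a b : ℝ}
    (ha : a ∈ Set.Ico (0:ℝ) T) (hb : b ∈ Set.Ico (0:ℝ) T)
    (h : Complex.exp (Complex.I * ((2 * Real.pi / T : ℝ) : ℂ) * (a : ℂ))
       = Complex.exp (Complex.I * ((2 * Real.pi / T : ℝ) : ℂ) * (b : ℂ))) : a = b := by
  have hπ := Real.pi_pos
  rw [Complex.exp_eq_exp_iff_exists_int] at h
  obtain ⟨n, hn⟩ := h
  have hreal : 2 * Real.pi / T * a = 2 * Real.pi / T * b + n * (2 * Real.pi) := by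
    have h2 : ((2 * Real.pi / T * a : ℝ) : ℂ) = ((2 * Real.pi / T * b + n * (2 * Real.pi) : ℝ) : ℂ) := by
      have hI : ((2 * Real.pi / T * a : ℝ) : ℂ) * Complex.I
          = ((2 * Real.pi / T * b + n * (2 * Real.pi) : ℝ) : ℂ) * Complex.I := by
        push_cast at hn ⊢
        linear_combination hn
      exact mul_right_cancel₀ Complex.I_ne_zero hI
    exact_mod_cast h2
  have hω : (0:ℝ) < 2 * Real.pi / T := by positivity
  have hn0 : n = 0 := by
    have habs : |2 * Real.pi / T * (a - b)| < 2 * Real.pi := by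
      rw [abs_mul, abs_of_pos hω]
      have : |a - b| < T := by
        rw [abs_sub_lt_iff]
        constructor <;> nlinarith [ha.1, ha.2, hb.1, hb.2]
      calc 2 * Real.pi / T * |a - b| < 2 * Real.pi / T * T :=
            mul_lt_mul_of_pos_left this hω
        _ = 2 * Real.pi := by field_simp
    have hval : 2 * Real.pi / T * (a - b) = n * (2 * Real.pi) := by linarith [hreal]
    rw [hval, abs_mul, abs_of_pos (by positivity : (0:ℝ) < 2 * Real.pi)] at habs
    have h1 : |(n:ℝ)| < 1 := by nlinarith
    have h2 : -1 < (n:ℝ) ∧ (n:ℝ) < 1 := abs_lt.mp h1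
    have h3 : -1 < n ∧ n < 1 := ⟨by exact_mod_cast h2.1, by exact_mod_cast h2.2⟩
    omega
  rw [hn0] at hreal
  push_cast at hreal
  have : 2 * Real.pi / T * a = 2 * Real.pi / T * b := by linarith
  exact mul_left_cancel₀ (ne_of_gt hω) this

private lemma trig_coeffs_zero_s16 (K : ℕ) {T : ℝ} (hT : 0 < T)
    (b : Fin (2*K+1) → ℂ) (s : Fin (2*K+1) → ℝ)
    (hs : ∀ m, s m ∈ Set.Ico (0:ℝ) T) (hinj : Function.Injective s)
    (hz : ∀ m, ∑ j : Fin (2*K+1), b j *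
        Complex.exp (Complex.I * (((j : ℤ) - (K : ℤ) : ℤ) : ℂ)
          * ((2 * Real.pi / T : ℝ) : ℂ) * ((s m : ℝ) : ℂ)) = 0) :
    ∀ j, b j = 0 := by
  set ω : ℝ := 2 * Real.pi / T with hωdef
  set z : Fin (2*K+1) → ℂ := fun m => Complex.exp (Complex.I * (ω : ℂ) * ((s m : ℝ) : ℂ)) with hzdef
  set P : Polynomial ℂ := ∑ j : Fin (2*K+1), Polynomial.monomial (j : ℕ) (b j) with hPdef
  have hcoeff : ∀ j : Fin (2*K+1), P.coeff (j : ℕ) = b j := by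
    intro j
    rw [hPdef, Polynomial.finset_sum_coeff]
    rw [Finset.sum_eq_single j]
    · simp
    · intro i _ hij
      rw [Polynomial.coeff_monomial, if_neg (by simpa [Fin.val_eq_val] using hij)]
    · simp
  have hdeg : P.natDegree ≤ 2*K := by
    apply Polynomial.natDegree_sum_le_of_forall_le
    intro j _
    exact (Polynomial.natDegree_monomial_le _).trans (by omega)
  have heval : ∀ m, P.eval (z m) = 0 := by
    intro m
    have hexp : ∀ j : Fin (2*K+1), (z m) ^ (j : ℕ)
        = Complex.exp (Complex.I * (((j : ℤ) - (K : ℤ) : ℤ) : ℂ) * (ω : ℂ) * ((s m : ℝ) : ℂ))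
          * Complex.exp (Complex.I * (K : ℂ) * (ω : ℂ) * ((s m : ℝ) : ℂ)) := by
      intro j
      rw [hzdef, ← Complex.exp_nat_mul, ← Complex.exp_add]
      congr 1
      push_cast
      ring
    rw [hPdef]
    rw [Polynomial.eval_finset_sum]
    simp only [Polynomial.eval_monomial]
    calc ∑ j : Fin (2*K+1), b j * z m ^ (j:ℕ)
        = (∑ j : Fin (2*K+1), b j *
            Complex.exp (Complex.I * (((j : ℤ) - (K : ℤ) : ℤ) : ℂ) * (ω : ℂ) * ((s m : ℝ) : ℂ)))
          * Complex.exp (Complex.I * (K : ℂ) * (ω : ℂ) * ((s m : ℝ) : ℂ)) := by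
          rw [Finset.sum_mul]
          exact Finset.sum_congr rfl fun j _ => by rw [hexp j]; ring
      _ = 0 := by rw [hz m, zero_mul]
  have hzinj : Function.Injective z := by
    intro m m' h
    exact hinj (expI_inj hT (hs m) (hs m') h)
  have hP0 : P = 0 := by
    apply Polynomial.eq_zero_of_natDegree_lt_card_of_eval_eq_zero P hzinj heval
    simpa using by omega
  intro j
  rw [← hcoeff j, hP0, Polynomial.coeff_zero]

/-- **Core null-space step.** The matrix `V` with entries `V[n,k] = e^{i k ω₀ tₙ}` for
`k ≠ 0` and `V[n,0] = tₙ` (columns indexed by `k = j - K`) admits no nonzero solution of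
`V x = c · 𝟙` when `N ≥ 2K + 2`: necessarily `x = 0` and `c = 0`. -/
theorem matrixV_eq_const_implies_zero
    (K : ℕ) (hK : 0 < K) (T : ℝ) (hT : 0 < T)
    (N : ℕ) (hN : 2 * K + 2 ≤ N)
    (t : Fin N → ℝ) (ht_mono : StrictMono t)
    (ht_nonneg : ∀ n, 0 ≤ t n) (ht_lt : ∀ n, t n < T)
    (V : Matrix (Fin N) (Fin (2 * K + 1)) ℂ)
    (hV : ∀ (n : Fin N) (j : Fin (2 * K + 1)),
      V n j =
        if ((j : ℤ) - (K : ℤ)) = 0 then ((t n : ℝ) : ℂ)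
        else Complex.exp (Complex.I * (((j : ℤ) - (K : ℤ) : ℤ) : ℂ)
              * ((2 * Real.pi / T : ℝ) : ℂ) * ((t n : ℝ) : ℂ))) :
    ∀ (x : Fin (2 * K + 1) → ℂ) (c : ℂ),
      V.mulVec x = (fun _ : Fin N => c) → (x = 0 ∧ c = 0) := by
  intro x c hmul
  -- the uniform exponential
  set E : Fin (2*K+1) → ℝ → ℂ := fun j s =>
    Complex.exp (Complex.I * (((j : ℤ) - (K : ℤ) : ℤ) : ℂ)
      * ((2 * Real.pi / T : ℝ) : ℂ) * ((s : ℝ) : ℂ)) with hE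
  set bco : Fin (2*K+1) → ℂ := fun j =>
    if ((j : ℤ) - (K : ℤ)) = 0 then x j
    else x j * (Complex.I * (((j : ℤ) - (K : ℤ) : ℤ) : ℂ) * ((2 * Real.pi / T : ℝ) : ℂ)) with hbco
  set f : ℝ → ℂ := fun s =>
    (∑ j : Fin (2*K+1), x j * (if ((j : ℤ) - (K : ℤ)) = 0 then ((s : ℝ) : ℂ) else E j s)) - c with hf
  set g : ℝ → ℂ := fun s => ∑ j : Fin (2*K+1), bco j * E j s with hg
  -- roots of f
  have hroot : ∀ n, f (t n) = 0 := by
    intro n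
    have hn := congrFun hmul n
    simp only [Matrix.mulVec, dotProduct] at hn
    simp only [hf]
    have : (∑ j : Fin (2*K+1), x j * (if ((j : ℤ) - (K : ℤ)) = 0 then ((t n : ℝ) : ℂ) else E j (t n)))
        = ∑ j : Fin (2*K+1), V n j * x j := by
      refine Finset.sum_congr rfl fun j _ => ?_
      rw [hV n j, mul_comm]
    rw [this, hn, sub_self]
  -- derivative of f
  have hderiv : ∀ s : ℝ, HasDerivAt f (g s) s := by
    intro s
    have hsum : HasDerivAt
        (fun s : ℝ => ∑ j : Fin (2*K+1), x j * (if ((j : ℤ) - (K : ℤ)) = 0 then ((s : ℝ) : ℂ) else E j s))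
        (∑ j : Fin (2*K+1), bco j * E j s) s := by
      apply HasDerivAt.fun_sum
      intro j _
      by_cases hj : ((j : ℤ) - (K : ℤ)) = 0
      · simp only [if_pos hj]
        have h1 : HasDerivAt (fun s : ℝ => x j * ((s : ℝ) : ℂ)) (x j * Complex.ofRealCLM 1) s :=
          Complex.ofRealCLM.hasDerivAt.const_mul (x j)
        refine h1.congr_deriv ?_
        rw [hbco, hE]
        simp [hj]
      · simp only [if_neg hj]
        have h0 : HasDerivAt (fun s : ℝ => Complex.I * (((j : ℤ) - (K : ℤ) : ℤ) : ℂ)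
            * ((2 * Real.pi / T : ℝ) : ℂ) * ((s : ℝ) : ℂ))
            (Complex.I * (((j : ℤ) - (K : ℤ) : ℤ) : ℂ) * ((2 * Real.pi / T : ℝ) : ℂ)
              * Complex.ofRealCLM 1) s :=
          Complex.ofRealCLM.hasDerivAt.const_mul _
        have h1 := (h0.cexp).const_mul (x j)
        refine h1.congr_deriv ?_
        rw [hbco, hE]
        simp only [if_neg hj, Complex.ofRealCLM_apply, Complex.ofReal_one, mul_one]
        ring
    exact hsum.sub_const c
  -- Rolle machinery
  have key : ∀ (F G : ℝ → ℝ), (∀ s, HasDerivAt F (G s) s) → (∀ n, F (t n) = 0) →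
      ∃ s : Fin (2*K+1) → ℝ, (∀ m, s m ∈ Set.Ico (0:ℝ) T) ∧ Function.Injective s ∧
        ∀ m, G (s m) = 0 := by
    intro F G hFG hF0
    have hFc : Continuous F := continuous_iff_continuousAt.2 fun s => (hFG s).continuousAt
    have hex : ∀ m : Fin (2*K+1), ∃ y,
        y ∈ Set.Ioo (t ⟨m, by omega⟩) (t ⟨m + 1, by omega⟩) ∧ G y = 0 := by
      intro m
      have hab : t (⟨m, by omega⟩ : Fin N) < t ⟨m + 1, by omega⟩ :=
        ht_mono (by simp [Fin.lt_def])
      obtain ⟨y, hy, hGy⟩ := exists_hasDerivAt_eq_zero hab (hFc.continuousOn)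
        ((hF0 _).trans (hF0 _).symm) (fun y _ => hFG y)
      exact ⟨y, hy, hGy⟩
    choose y hy hGy using hex
    have hmono : StrictMono y := by
      intro m m' hmm
      have h1 : y m < t ⟨(m : ℕ) + 1, by omega⟩ := (hy m).2
      have h2 : t (⟨(m : ℕ) + 1, by omega⟩ : Fin N) ≤ t ⟨m', by omega⟩ :=
        ht_mono.monotone (by simp [Fin.le_def]; omega)
      exact lt_of_lt_of_le (lt_of_lt_of_le h1 h2) (le_of_lt (hy m').1)
    refine ⟨y, fun m => ⟨?_, ?_⟩, hmono.injective, hGy⟩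
    · exact le_of_lt (lt_of_le_of_lt (ht_nonneg _) (hy m).1)
    · exact lt_trans (hy m).2 (ht_lt _)
  -- real and imaginary parts
  have hre : ∃ s : Fin (2*K+1) → ℝ, (∀ m, s m ∈ Set.Ico (0:ℝ) T) ∧ Function.Injective s ∧
      ∀ m, (g (s m)).re = 0 := by
    apply key (fun s => (f s).re) (fun s => (g s).re)
    · intro s
      exact Complex.reCLM.hasFDerivAt.comp_hasDerivAt s (hderiv s)
    · intro n; rw [hroot n]; simp
  have him : ∃ s : Fin (2*K+1) → ℝ, (∀ m, s m ∈ Set.Ico (0:ℝ) T) ∧ Function.Injective s ∧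
      ∀ m, (g (s m)).im = 0 := by
    apply key (fun s => (f s).im) (fun s => (g s).im)
    · intro s
      exact Complex.imCLM.hasFDerivAt.comp_hasDerivAt s (hderiv s)
    · intro n; rw [hroot n]; simp
  obtain ⟨su, hsu, hsuinj, hgu⟩ := hre
  obtain ⟨sv, hsv, hsvinj, hgv⟩ := him
  -- conjugation identity
  have hconjE : ∀ (j : Fin (2*K+1)) (s : ℝ), (starRingEnd ℂ) (E j s) = E j.rev s := by
    intro j s
    rw [hE, ← Complex.exp_conj]
    congr 1
    have hjrev : ((j.rev : ℤ) - (K : ℤ)) = -(((j : ℤ) - (K : ℤ))) := by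
      have : (j.rev : ℕ) = 2 * K - (j : ℕ) := by
        simp only [Fin.val_rev]; omega
      rw [this]
      have hj2K : (j : ℕ) ≤ 2 * K := by omega
      push_cast [hj2K]
      ring
    simp only [map_mul, Complex.conj_I, Complex.conj_ofReal, map_intCast]
    rw [hjrev]
    push_cast
    ring
  have hgconj : ∀ s : ℝ, (starRingEnd ℂ) (g s)
      = ∑ j : Fin (2*K+1), (starRingEnd ℂ) (bco j.rev) * E j s := by
    intro s
    rw [hg, map_sum]
    rw [Fintype.sum_bijective Fin.rev Fin.rev_bijective
      (fun j => (starRingEnd ℂ) (bco (Fin.rev j)) * E j s)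
      (fun j => (starRingEnd ℂ) (bco j) * E (Fin.rev j) s)
      (fun j => by simp only [Fin.rev_rev])]
    refine Finset.sum_congr rfl fun j _ => ?_
    rw [map_mul, hconjE]
  -- apply the trig lemma twice
  have hcu : ∀ j, bco j + (starRingEnd ℂ) (bco j.rev) = 0 := by
    apply trig_coeffs_zero_s16 K hT _ su hsu hsuinj
    intro m
    have : ∑ j : Fin (2*K+1), (bco j + (starRingEnd ℂ) (bco j.rev)) * E j (su m)
        = g (su m) + (starRingEnd ℂ) (g (su m)) := by
      rw [hgconj, hg, ← Finset.sum_add_distrib]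
      exact Finset.sum_congr rfl fun j _ => by ring
    rw [hE] at this
    rw [this, Complex.add_conj, hgu m]
    simp
  have hcv : ∀ j, bco j - (starRingEnd ℂ) (bco j.rev) = 0 := by
    apply trig_coeffs_zero_s16 K hT _ sv hsv hsvinj
    intro m
    have : ∑ j : Fin (2*K+1), (bco j - (starRingEnd ℂ) (bco j.rev)) * E j (sv m)
        = g (sv m) - (starRingEnd ℂ) (g (sv m)) := by
      rw [hgconj, hg, ← Finset.sum_sub_distrib]
      exact Finset.sum_congr rfl fun j _ => by ring
    rw [hE] at this
    rw [this, Complex.sub_conj, hgv m]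
    simp
  have hbco0 : ∀ j, bco j = 0 := by
    intro j
    have := hcu j
    have := hcv j
    have h2 : 2 * bco j = 0 := by linear_combination hcu j + hcv j
    simpa using h2
  have hx0 : ∀ j, x j = 0 := by
    intro j
    have hb := hbco0 j
    rw [hbco] at hb
    by_cases hj : ((j : ℤ) - (K : ℤ)) = 0
    · simpa [hj] using hb
    · simp only [if_neg hj] at hb
      have hne : Complex.I * (((j : ℤ) - (K : ℤ) : ℤ) : ℂ) * ((2 * Real.pi / T : ℝ) : ℂ) ≠ 0 := by
        apply mul_ne_zero (mul_ne_zero Complex.I_ne_zero ?_) ?_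
        · exact_mod_cast hj
        · rw [Ne, Complex.ofReal_eq_zero]
          positivity
      exact (mul_eq_zero.mp hb).resolve_right hne
  have hx : x = 0 := funext fun j => hx0 j
  refine ⟨hx, ?_⟩
  have h0 := congrFun hmul ⟨0, by omega⟩
  simp only [Matrix.mulVec, dotProduct, hx] at h0
  simpa using h0.symm
end
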